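/- arXiv:2407.14764 — 3 statements merged into one kernel-verified Lean document; each statement's English description precedes it below -/
import Mathlib

section
/- For every n ≥ 1, rank_{ℤ₊}(M_{2n+1}) ≥ rank_{ℤ₊}(M_n) + 1. -/
open Matrix BigOperators

noncomputable section

/-- The ambient space `ℝ^n`. -/
abbrev V (n : ℕ) := Fin n → ℝ

/-- The difference set `Λ_Γ = {x - y : x, y ∈ Γ}` of a set `Γ ⊆ ℝ^n`. -/
def diffSet {n : ℕ} (Γ : Set (V n)) : Set (V n) := {z | ∃ x ∈ Γ, ∃ y ∈ Γ, z = x - y}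

/-- A set is discrete if each of its points is isolated in it. -/
def IsDiscreteSet {n : ℕ} (Λ : Set (V n)) : Prop :=
  ∀ x ∈ Λ, ∃ ε : ℝ, 0 < ε ∧ ∀ y ∈ Λ, dist y x < ε → y = x

/-- An affine semigroup: a finitely generated additive submonoid of `ℝ^n` whose
difference group is discrete (a lattice). -/
def IsAffineSemigroup {n : ℕ} (Γ : Set (V n)) : Prop :=
  (∃ S : Finset (V n), (AddSubmonoid.closure (S : Set (V n)) : Set (V n)) = Γ) ∧
    IsDiscreteSet (diffSet Γ)

/-- A set is positive if `0` is its only element whose negative also belongs to it. -/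
def IsPositive {n : ℕ} (Γ : Set (V n)) : Prop := ∀ x ∈ Γ, -x ∈ Γ → x = 0

/-- The convex cone `K_Γ` of all nonnegative real combinations of elements of `Γ`. -/
def coneOf {n : ℕ} (Γ : Set (V n)) : Set (V n) :=
  {y | ∃ (k : ℕ) (c : Fin k → ℝ) (v : Fin k → V n),
    (∀ i, 0 ≤ c i) ∧ (∀ i, v i ∈ Γ) ∧ y = ∑ i, c i • v i}

/-- The dual cone `K* = {y : ⟨x,y⟩ ≥ 0 for all x ∈ K}`. -/
def dualCone {n : ℕ} (K : Set (V n)) : Set (V n) := {y | ∀ x ∈ K, 0 ≤ x ⬝ᵥ y}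

/-- The dual lattice `Λ* = {w ∈ span(Λ) : ⟨w,v⟩ ∈ ℤ for all v ∈ Λ}`. -/
def dualLattice {n : ℕ} (Λ : Set (V n)) : Set (V n) :=
  {w | w ∈ Submodule.span ℝ Λ ∧ ∀ v ∈ Λ, ∃ m : ℤ, w ⬝ᵥ v = (m : ℝ)}

/-- The dual affine semigroup `Γ* = (Λ_Γ)* ∩ (K_Γ)*`. -/
def dualSemigroup {n : ℕ} (Γ : Set (V n)) : Set (V n) :=
  dualLattice (diffSet Γ) ∩ dualCone (coneOf Γ)

/-- `A` generates the additive monoid `Γ`. -/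
def IsGenSet {n : ℕ} (A Γ : Set (V n)) : Prop := (AddSubmonoid.closure A : Set (V n)) = Γ

/-- `A` is a minimal generating set of the additive monoid `Γ`: it generates, and no
proper subset of it generates. -/
def IsMinGenSet {n : ℕ} (A Γ : Set (V n)) : Prop :=
  IsGenSet A Γ ∧ ∀ B ⊂ A, ¬ IsGenSet B Γ

/-- `S` is the slack matrix of the positive affine semigroup `Γ`: its `(i,j)` entry is
`⟨a i, b j⟩` where `a`, `b` enumerate the minimal generating sets of `Γ` and `Γ*`. -/
def IsSlackMatrix {n k l : ℕ} (Γ : Set (V n)) (S : Matrix (Fin k) (Fin l) ℤ) : Prop :=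
  ∃ (a : Fin k → V n) (b : Fin l → V n),
    Function.Injective a ∧ Function.Injective b ∧
    IsMinGenSet (Set.range a) Γ ∧ IsMinGenSet (Set.range b) (dualSemigroup Γ) ∧
    ∀ i j, (S i j : ℝ) = a i ⬝ᵥ b j

/-- The `i`-th row of an integer matrix, viewed as a real vector. -/
def rowVec {k l : ℕ} (S : Matrix (Fin k) (Fin l) ℤ) (i : Fin k) : V l := fun j => (S i j : ℝ)

/-- The `j`-th column of an integer matrix, viewed as a real vector. -/
def colVec {k l : ℕ} (S : Matrix (Fin k) (Fin l) ℤ) (j : Fin l) : V k := fun i => (S i j : ℝ)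

/-- `Γ_S^row`: all nonnegative integer combinations of the rows of `S`. -/
def GammaRow {k l : ℕ} (S : Matrix (Fin k) (Fin l) ℤ) : Set (V l) :=
  {x | ∃ c : Fin k → ℕ, x = ∑ i, (c i : ℝ) • rowVec S i}

/-- `Γ_S^col`: all nonnegative integer combinations of the columns of `S`. -/
def GammaCol {k l : ℕ} (S : Matrix (Fin k) (Fin l) ℤ) : Set (V k) :=
  {x | ∃ c : Fin l → ℕ, x = ∑ j, (c j : ℝ) • colVec S j}

/-- `Λ_S^row`: all integer combinations of the rows of `S`. -/
def LambdaRow {k l : ℕ} (S : Matrix (Fin k) (Fin l) ℤ) : Set (V l) :=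
  {x | ∃ c : Fin k → ℤ, x = ∑ i, (c i : ℝ) • rowVec S i}

/-- `Λ_S^col`: all integer combinations of the columns of `S`. -/
def LambdaCol {k l : ℕ} (S : Matrix (Fin k) (Fin l) ℤ) : Set (V k) :=
  {x | ∃ c : Fin l → ℤ, x = ∑ j, (c j : ℝ) • colVec S j}

/-- `K_S^row`: all nonnegative real combinations of the rows of `S`. -/
def KRow {k l : ℕ} (S : Matrix (Fin k) (Fin l) ℤ) : Set (V l) :=
  {x | ∃ c : Fin k → ℝ, (∀ i, 0 ≤ c i) ∧ x = ∑ i, c i • rowVec S i}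

/-- `K_S^col`: all nonnegative real combinations of the columns of `S`. -/
def KCol {k l : ℕ} (S : Matrix (Fin k) (Fin l) ℤ) : Set (V k) :=
  {x | ∃ c : Fin l → ℝ, (∀ j, 0 ≤ c j) ∧ x = ∑ j, c j • colVec S j}

/-- `Row(S)`: the row space of `S` over `ℝ`. -/
def RowSpace {k l : ℕ} (S : Matrix (Fin k) (Fin l) ℤ) : Set (V l) :=
  (Submodule.span ℝ (Set.range (rowVec S)) : Set (V l))

/-- `Col(S)`: the column space of `S` over `ℝ`. -/
def ColSpace {k l : ℕ} (S : Matrix (Fin k) (Fin l) ℤ) : Set (V k) :=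
  (Submodule.span ℝ (Set.range (colVec S)) : Set (V k))

/-- `ℤ^l` viewed inside `ℝ^l`. -/
def intPts (l : ℕ) : Set (V l) := {x | ∀ j, ∃ m : ℤ, x j = (m : ℝ)}

/-- `ℤ₊^l` viewed inside `ℝ^l`. -/
def nnIntPts (l : ℕ) : Set (V l) := {x | ∀ j, ∃ m : ℕ, x j = (m : ℝ)}

/-- `ℝ₊^l`: the nonnegative orthant. -/
def nnPts (l : ℕ) : Set (V l) := {x | ∀ j, 0 ≤ x j}

/-- `ι` (a linear map restricting to an additive semigroup homomorphism `Γ → Γ'`) is a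
lift of the positive affine semigroup `Γ`: `Γ'` is a positive affine semigroup and the
adjoint `ι*` (characterized on `Γ` by `⟨x, ι*(y)⟩ = ⟨ι(x), y⟩`) satisfies
`ι*(Γ'*) = Γ*`. -/
structure IsLift {n N : ℕ} (Γ : Set (V n)) (Γ' : Set (V N)) (ι : (V n) →ₗ[ℝ] (V N)) : Prop where
  lift_semigroup : IsAffineSemigroup Γ'
  lift_positive : IsPositive Γ'
  maps_to : ∀ x ∈ Γ, ι x ∈ Γ'
  adjoint_mem : ∀ y ∈ dualSemigroup Γ', ∃ z ∈ dualSemigroup Γ, ∀ x ∈ Γ, x ⬝ᵥ z = (ι x) ⬝ᵥ y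
  adjoint_surj : ∀ z ∈ dualSemigroup Γ, ∃ y ∈ dualSemigroup Γ', ∀ x ∈ Γ, x ⬝ᵥ z = (ι x) ⬝ᵥ y

/-- The nonnegative integer rank: the least inner dimension of a factorization
`A = B * C` with `B`, `C` nonnegative integer matrices. -/
def nnIntRank {m l : Type*} [Fintype m] [Fintype l] (A : Matrix m l ℤ) : ℕ :=
  sInf {r : ℕ | ∃ (B : Matrix m (Fin r) ℤ) (C : Matrix (Fin r) l ℤ),
    (∀ i j, 0 ≤ B i j) ∧ (∀ i j, 0 ≤ C i j) ∧ A = B * C}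

/-- The nonnegative rank: the least inner dimension of a factorization
`A = B * C` with `B`, `C` nonnegative real matrices. -/
def nnRank {m l : Type*} [Fintype m] [Fintype l] (A : Matrix m l ℤ) : ℕ :=
  sInf {r : ℕ | ∃ (B : Matrix m (Fin r) ℝ) (C : Matrix (Fin r) l ℝ),
    (∀ i j, 0 ≤ B i j) ∧ (∀ i j, 0 ≤ C i j) ∧ A.map (fun z => (z : ℝ)) = B * C}

/-- The Fibonacci semigroup `Γ^Fib_n = ℤ² ∩ {(x,y) : 0 ≤ F_{2n}·y ≤ F_{2n+2}·x}`
(with `Nat.fib`, so `F 1 = F 2 = 1`). -/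
def GammaFib (n : ℕ) : Set (V 2) :=
  {p | (∃ a : ℤ, p 0 = (a : ℝ)) ∧ (∃ b : ℤ, p 1 = (b : ℝ)) ∧
    0 ≤ (Nat.fib (2 * n) : ℝ) * p 1 ∧
    (Nat.fib (2 * n) : ℝ) * p 1 ≤ (Nat.fib (2 * n + 2) : ℝ) * p 0}

/-- Fibonacci numbers extended to negative indices by `F_{-m} = (-1)^{m+1} F_m`. -/
def fibZ (m : ℤ) : ℤ :=
  if 0 ≤ m then (Nat.fib m.toNat : ℤ)
  else (-1) ^ ((-m).toNat + 1) * (Nat.fib (-m).toNat : ℤ)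

/-- The `(n+1) × (n+1)` Toeplitz matrix with `(i,j)` entry `F_{2(i-j)+1}`. -/
def Mfib (n : ℕ) : Matrix (Fin (n + 1)) (Fin (n + 1)) ℤ :=
  fun i j => fibZ (2 * ((i : ℤ) - (j : ℤ)) + 1)

/-- `‖A‖₁`: the sum of all entries of a matrix. -/
def entrySum {m l : Type*} [Fintype m] [Fintype l] (A : Matrix m l ℤ) : ℤ := ∑ i, ∑ j, A i j

lemma fibZ_ofNat (k : ℕ) : fibZ (k : ℤ) = (Nat.fib k : ℤ) := by
  simp [fibZ]

lemma fibZ_negOdd (t : ℕ) : fibZ (-(2 * (t : ℤ) + 1)) = (Nat.fib (2 * t + 1) : ℤ) := by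
  have h1 : ¬ (0 ≤ -(2 * (t : ℤ) + 1)) := by omega
  rw [fibZ, if_neg h1, neg_neg]
  have h2 : (2 * (t : ℤ) + 1) = ((2 * t + 1 : ℕ) : ℤ) := by push_cast; ring
  rw [h2, Int.toNat_natCast]
  have : (-1 : ℤ) ^ (2 * t + 1 + 1) = 1 := by
    have : Even (2 * t + 1 + 1) := ⟨t + 1, by ring⟩
    exact this.neg_one_pow
  rw [this, one_mul]

lemma fibZ_odd_nonneg (d : ℤ) : 0 ≤ fibZ (2 * d + 1) := by
  rcases le_or_gt 0 d with h | h
  · obtain ⟨k, rfl⟩ : ∃ k : ℕ, d = (k : ℤ) := ⟨d.toNat, by omega⟩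
    have : (2 * (k : ℤ) + 1) = ((2 * k + 1 : ℕ) : ℤ) := by push_cast; ring
    rw [this, fibZ_ofNat]; positivity
  · obtain ⟨t, ht⟩ : ∃ t : ℕ, d = -(t : ℤ) - 1 := ⟨(-d - 1).toNat, by omega⟩
    have : (2 * d + 1) = -(2 * (t : ℤ) + 1) := by omega
    rw [this, fibZ_negOdd]; positivity

lemma Mfib_nonneg (N : ℕ) (i j : Fin (N + 1)) : 0 ≤ Mfib N i j :=
  fibZ_odd_nonneg _

/-- entries above/on the diagonal in the `i ≤ j` sense, bounded by `fib (2q+1)`. -/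
lemma fibZ_le_of_le (i j q : ℕ) (hij : i ≤ j) (h : j ≤ i + q + 1) :
    fibZ (2 * ((i : ℤ) - (j : ℤ)) + 1) ≤ (Nat.fib (2 * q + 1) : ℤ) := by
  rcases eq_or_lt_of_le hij with rfl | hlt
  · have : (2 * ((i : ℤ) - (i : ℤ)) + 1) = ((1 : ℕ) : ℤ) := by ring
    rw [this, fibZ_ofNat]
    exact_mod_cast Nat.fib_mono (by omega : 1 ≤ 2 * q + 1)
  · obtain ⟨t, ht⟩ : ∃ t : ℕ, j = i + t + 1 := ⟨j - i - 1, by omega⟩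
    have : (2 * ((i : ℤ) - (j : ℤ)) + 1) = -(2 * (t : ℤ) + 1) := by
      subst ht; push_cast; ring
    rw [this, fibZ_negOdd]
    exact_mod_cast Nat.fib_mono (by omega : 2 * t + 1 ≤ 2 * q + 1)

/-- telescoping sum of odd-index Fibonacci numbers -/
lemma sum_fib_odd (m q : ℕ) :
    ∑ j ∈ Finset.range q, (Nat.fib (2 * (m + j) + 1) : ℤ)
      = (Nat.fib (2 * (m + q)) : ℤ) - (Nat.fib (2 * m) : ℤ) := by
  induction q with
  | zero => simp
  | succ q ih =>
      rw [Finset.sum_range_succ, ih]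
      have h1 : 2 * (m + (q + 1)) = 2 * (m + q) + 2 := by ring
      have h2 : (Nat.fib (2 * (m + q) + 2) : ℤ)
          = (Nat.fib (2 * (m + q)) : ℤ) + (Nat.fib (2 * (m + q) + 1) : ℤ) := by
        exact_mod_cast Nat.fib_add_two (n := 2 * (m + q))
      rw [h1, h2]; ring

lemma sum_fib_even (q : ℕ) :
    ∑ j ∈ Finset.range q, (Nat.fib (2 * j + 2) : ℤ) = (Nat.fib (2 * q + 1) : ℤ) - 1 := by
  induction q with
  | zero => simp
  | succ q ih =>
      rw [Finset.sum_range_succ, ih]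
      have h1 : 2 * (q + 1) + 1 = 2 * q + 1 + 2 := by ring
      have h2 : (Nat.fib (2 * q + 1 + 2) : ℤ)
          = (Nat.fib (2 * q + 1) : ℤ) + (Nat.fib (2 * q + 1 + 1) : ℤ) := by
        exact_mod_cast Nat.fib_add_two (n := 2 * q + 1)
      have h3 : 2 * q + 1 + 1 = 2 * q + 2 := by ring
      rw [h1, h2, h3]; ring

/-- row sums of the matrix `fibZ (2(i-j)+1)` over `j ∈ range (n+1)` -/
lemma row_sum (n i : ℕ) (hi : i ≤ n) :
    ∑ j ∈ Finset.range (n + 1), fibZ (2 * ((i : ℤ) - (j : ℤ)) + 1)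
      = (Nat.fib (2 * i + 2) : ℤ) + (Nat.fib (2 * (n - i)) : ℤ) := by
  rw [Finset.range_eq_Ico,
    ← Finset.sum_Ico_consecutive _ (by omega : 0 ≤ i + 1) (by omega : i + 1 ≤ n + 1)]
  have part1 : ∑ j ∈ Finset.Ico 0 (i + 1), fibZ (2 * ((i : ℤ) - (j : ℤ)) + 1)
      = (Nat.fib (2 * i + 2) : ℤ) := by
    rw [← Finset.range_eq_Ico]
    have step : ∀ j ∈ Finset.range (i + 1),
        fibZ (2 * ((i : ℤ) - (j : ℤ)) + 1) = (Nat.fib (2 * (i - j) + 1) : ℤ) := by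
      intro j hj
      have hj' : j ≤ i := by simpa using Nat.lt_succ_iff.mp (Finset.mem_range.mp hj)
      have : (2 * ((i : ℤ) - (j : ℤ)) + 1) = ((2 * (i - j) + 1 : ℕ) : ℤ) := by
        push_cast [Nat.cast_sub hj']; ring
      rw [this, fibZ_ofNat]
    rw [Finset.sum_congr rfl step]
    have hrefl := Finset.sum_range_reflect (fun d => (Nat.fib (2 * d + 1) : ℤ)) (i + 1)
    have : ∀ j ∈ Finset.range (i + 1),
        (Nat.fib (2 * (i - j) + 1) : ℤ) = (fun d => (Nat.fib (2 * d + 1) : ℤ)) (i + 1 - 1 - j) := by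
      intro j hj; simp
    rw [Finset.sum_congr rfl this, hrefl]
    have hs := sum_fib_odd 0 (i + 1)
    simp only [Nat.zero_add, zero_add] at hs
    rw [hs]
    have : 2 * (i + 1) = 2 * i + 2 := by ring
    rw [this]; simp
  have part2 : ∑ j ∈ Finset.Ico (i + 1) (n + 1), fibZ (2 * ((i : ℤ) - (j : ℤ)) + 1)
      = (Nat.fib (2 * (n - i)) : ℤ) := by
    rw [Finset.sum_Ico_eq_sum_range]
    have h1 : n + 1 - (i + 1) = n - i := by omega
    rw [h1]
    have step : ∀ t ∈ Finset.range (n - i),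
        fibZ (2 * ((i : ℤ) - ((i + 1 + t : ℕ) : ℤ)) + 1) = (Nat.fib (2 * (0 + t) + 1) : ℤ) := by
      intro t ht
      have : (2 * ((i : ℤ) - ((i + 1 + t : ℕ) : ℤ)) + 1) = -(2 * (t : ℤ) + 1) := by
        push_cast; ring
      rw [this, fibZ_negOdd]; norm_num
    rw [Finset.sum_congr rfl step, sum_fib_odd 0 (n - i)]
    simp
  rw [part1, part2]

lemma total_sum (n : ℕ) :
    ∑ i ∈ Finset.range (n + 1), ∑ j ∈ Finset.range (n + 1),
        fibZ (2 * ((i : ℤ) - (j : ℤ)) + 1)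
      = (Nat.fib (2 * n + 3) : ℤ) + (Nat.fib (2 * n + 1) : ℤ) - 2 := by
  have step : ∀ i ∈ Finset.range (n + 1),
      ∑ j ∈ Finset.range (n + 1), fibZ (2 * ((i : ℤ) - (j : ℤ)) + 1)
        = (Nat.fib (2 * i + 2) : ℤ) + (Nat.fib (2 * (n - i)) : ℤ) := by
    intro i hi
    exact row_sum n i (Nat.lt_succ_iff.mp (Finset.mem_range.mp hi))
  rw [Finset.sum_congr rfl step, Finset.sum_add_distrib]
  have h1 : ∑ i ∈ Finset.range (n + 1), (Nat.fib (2 * i + 2) : ℤ)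
      = (Nat.fib (2 * (n + 1) + 1) : ℤ) - 1 := sum_fib_even (n + 1)
  have h2 : ∑ i ∈ Finset.range (n + 1), (Nat.fib (2 * (n - i)) : ℤ)
      = (Nat.fib (2 * n + 1) : ℤ) - 1 := by
    have hrefl := Finset.sum_range_reflect (fun d => (Nat.fib (2 * d) : ℤ)) (n + 1)
    have e : ∀ i ∈ Finset.range (n + 1),
        (Nat.fib (2 * (n - i)) : ℤ) = (fun d => (Nat.fib (2 * d) : ℤ)) (n + 1 - 1 - i) := by
      intro i hi; simp
    rw [Finset.sum_congr rfl e, hrefl]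
    rw [Finset.sum_range_succ']
    have : ∀ i ∈ Finset.range n, (Nat.fib (2 * (i + 1)) : ℤ) = (Nat.fib (2 * i + 2) : ℤ) := by
      intro i _; ring_nf
    rw [Finset.sum_congr rfl this, sum_fib_even n]
    simp
  rw [h1, h2]
  have : 2 * (n + 1) + 1 = 2 * n + 3 := by ring
  rw [this]; ring

/-- the key Fibonacci inequality -/
lemma key_ineq (p : ℕ) :
    (Nat.fib (2 * p + 1) : ℤ) * ((Nat.fib (2 * p + 5) : ℤ) + (Nat.fib (2 * p + 3) : ℤ) - 2) + 1
      ≤ (Nat.fib (4 * p + 6) : ℤ) - (Nat.fib (2 * p + 2) : ℤ) := by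
  have ha : 1 ≤ (Nat.fib (2 * p + 1) : ℤ) := by
    have := Nat.fib_pos.mpr (by omega : 0 < 2 * p + 1)
    exact_mod_cast this
  have hab : (Nat.fib (2 * p + 1) : ℤ) ≤ (Nat.fib (2 * p + 2) : ℤ) := by
    exact_mod_cast Nat.fib_mono (by omega : 2 * p + 1 ≤ 2 * p + 2)
  have e3 : (Nat.fib (2 * p + 3) : ℤ) = (Nat.fib (2 * p + 1) : ℤ) + (Nat.fib (2 * p + 2) : ℤ) := by
    have h : 2 * p + 3 = 2 * p + 1 + 2 := by ring
    rw [h]; exact_mod_cast Nat.fib_add_two (n := 2 * p + 1)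
  have e4 : (Nat.fib (2 * p + 4) : ℤ) = (Nat.fib (2 * p + 2) : ℤ) + (Nat.fib (2 * p + 3) : ℤ) := by
    have h : 2 * p + 4 = 2 * p + 2 + 2 := by ring
    rw [h]; exact_mod_cast Nat.fib_add_two (n := 2 * p + 2)
  have e5 : (Nat.fib (2 * p + 5) : ℤ) = (Nat.fib (2 * p + 3) : ℤ) + (Nat.fib (2 * p + 4) : ℤ) := by
    have h : 2 * p + 5 = 2 * p + 3 + 2 := by ring
    rw [h]; exact_mod_cast Nat.fib_add_two (n := 2 * p + 3)
  have e6 : (Nat.fib (4 * p + 6) : ℤ)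
      = (Nat.fib (2 * p + 2) : ℤ) * (Nat.fib (2 * p + 3) : ℤ)
        + (Nat.fib (2 * p + 3) : ℤ) * (Nat.fib (2 * p + 4) : ℤ) := by
    have hn := Nat.fib_add (2 * p + 2) (2 * p + 3)
    have h1 : 2 * p + 2 + (2 * p + 3) + 1 = 4 * p + 6 := by ring
    have h2 : 2 * p + 2 + 1 = 2 * p + 3 := by ring
    have h3 : 2 * p + 3 + 1 = 2 * p + 4 := by ring
    rw [h1, h2, h3] at hn
    exact_mod_cast hn
  rw [e4] at e5 e6
  rw [e3] at e5 e6
  rw [e5, e3, e6]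
  nlinarith [ha, hab,
    mul_le_mul hab hab (by linarith) (by linarith),
    mul_nonneg (by linarith : (0:ℤ) ≤ (Nat.fib (2 * p + 2) : ℤ) - 1) (by linarith : (0:ℤ) ≤ (Nat.fib (2 * p + 2) : ℤ)),
    mul_nonneg (by linarith : (0:ℤ) ≤ (Nat.fib (2 * p + 1) : ℤ) - 1) (by linarith : (0:ℤ) ≤ (Nat.fib (2 * p + 1) : ℤ))]

lemma Mfib_apply' (N : ℕ) (i j : Fin (N + 1)) :
    Mfib N i j = fibZ (2 * ((i.1 : ℤ) - (j.1 : ℤ)) + 1) := rfl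

/-- dropping an unused index from a factorization -/
lemma drop_lemma {d r : ℕ} (M : Matrix (Fin d) (Fin d) ℤ)
    (b : Fin d → Fin (r + 1) → ℤ) (c : Fin (r + 1) → Fin d → ℤ)
    (hb : ∀ i k, 0 ≤ b i k) (hc : ∀ k j, 0 ≤ c k j)
    (k : Fin (r + 1)) (hk : (∀ i, b i k = 0) ∨ (∀ j, c k j = 0))
    (hM : ∀ i j, M i j = ∑ k', b i k' * c k' j) :
    ∃ (B : Matrix (Fin d) (Fin r) ℤ) (C : Matrix (Fin r) (Fin d) ℤ),
      (∀ i j, 0 ≤ B i j) ∧ (∀ i j, 0 ≤ C i j) ∧ M = B * C := by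
  refine ⟨fun i k' => b i (k.succAbove k'), fun k' j => c (k.succAbove k') j,
    fun _ _ => hb _ _, fun _ _ => hc _ _, ?_⟩
  ext i j
  show M i j = ∑ k', b i (k.succAbove k') * c (k.succAbove k') j
  rw [hM i j, Fin.sum_univ_succAbove (fun k' => b i k' * c k' j) k]
  have hz : b i k * c k j = 0 := by
    rcases hk with h | h
    · rw [h i, zero_mul]
    · rw [h j, mul_zero]
  rw [hz, zero_add]

lemma main_aux (p r : ℕ)
    (B : Matrix (Fin (2 * (p + 1) + 1 + 1)) (Fin r) ℤ)
    (C : Matrix (Fin r) (Fin (2 * (p + 1) + 1 + 1)) ℤ)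
    (hB : ∀ i j, 0 ≤ B i j) (hC : ∀ i j, 0 ≤ C i j)
    (hBC : Mfib (2 * (p + 1) + 1) = B * C) :
    nnIntRank (Mfib (p + 1)) + 1 ≤ r := by
  -- r = 0 is impossible
  rcases r with _ | r
  · exfalso
    have h00 := congrFun (congrFun hBC ⟨0, by omega⟩) ⟨0, by omega⟩
    rw [Matrix.mul_apply] at h00
    simp only [Finset.univ_eq_empty, Finset.sum_empty] at h00
    rw [Mfib_apply'] at h00
    have : fibZ (2 * (((0 : ℕ) : ℤ) - ((0 : ℕ) : ℤ)) + 1) = 1 := by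
      have harg : (2 * (((0 : ℕ) : ℤ) - ((0 : ℕ) : ℤ)) + 1) = ((1 : ℕ) : ℤ) := by norm_num
      rw [harg, fibZ_ofNat]; simp
    rw [this] at h00
    exact one_ne_zero h00
  -- embeddings
  have hlt : ∀ i : Fin (p + 1 + 1), (i.1 : ℕ) < 2 * (p + 1) + 1 + 1 := fun i => by omega
  set topE : Fin (p + 1 + 1) → Fin (2 * (p + 1) + 1 + 1) := fun i => ⟨i.1, by omega⟩ with htopE
  set botE : Fin (p + 1 + 1) → Fin (2 * (p + 1) + 1 + 1) := fun i => ⟨i.1 + (p + 2), by omega⟩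
    with hbotE
  have hAentry : ∀ a b', Mfib (2 * (p + 1) + 1) a b' = ∑ k, B a k * C k b' := by
    intro a b'
    rw [hBC, Matrix.mul_apply]
  -- the two reduction branches
  by_cases hP : ∃ k, (∀ i, B (topE i) k = 0) ∨ (∀ j, C k (topE j) = 0)
  · obtain ⟨k, hk⟩ := hP
    obtain ⟨B', C', h1, h2, h3⟩ := drop_lemma (Mfib (p + 1))
      (fun i k' => B (topE i) k') (fun k' j => C k' (topE j))
      (fun _ _ => hB _ _) (fun _ _ => hC _ _) k hk
      (fun i j => hAentry (topE i) (topE j))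
    have : nnIntRank (Mfib (p + 1)) ≤ r := Nat.sInf_le ⟨B', C', h1, h2, h3⟩
    omega
  by_cases hQ : ∃ k, (∀ i, B (botE i) k = 0) ∨ (∀ j, C k (botE j) = 0)
  · obtain ⟨k, hk⟩ := hQ
    have hMbot : ∀ i j : Fin (p + 1 + 1),
        Mfib (p + 1) i j = ∑ k', B (botE i) k' * C k' (botE j) := by
      intro i j
      rw [← hAentry (botE i) (botE j), Mfib_apply', Mfib_apply']
      congr 1
      show 2 * ((i.1 : ℤ) - (j.1 : ℤ)) + 1
          = 2 * (((i.1 + (p + 2) : ℕ) : ℤ) - ((j.1 + (p + 2) : ℕ) : ℤ)) + 1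
      push_cast; ring
    obtain ⟨B', C', h1, h2, h3⟩ := drop_lemma (Mfib (p + 1))
      (fun i k' => B (botE i) k') (fun k' j => C k' (botE j))
      (fun _ _ => hB _ _) (fun _ _ => hC _ _) k hk hMbot
    have : nnIntRank (Mfib (p + 1)) ≤ r := Nat.sInf_le ⟨B', C', h1, h2, h3⟩
    omega
  -- contradiction branch
  exfalso
  push_neg at hP hQ
  set S : ℤ := (Nat.fib (2 * p + 1) : ℤ) with hS
  have hS1 : 1 ≤ S := by
    rw [hS]
    have := Nat.fib_pos.mpr (by omega : 0 < 2 * p + 1)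
    exact_mod_cast this
  set top0 : Fin (2 * (p + 1) + 1 + 1) := ⟨0, by omega⟩ with htop0
  set topn : Fin (2 * (p + 1) + 1 + 1) := ⟨p + 1, by omega⟩ with htopn
  -- each left factor is ≤ 0
  have hf : ∀ k, B top0 k - S * ∑ i : Fin (p + 1 + 1), B (botE i) k ≤ 0 := by
    intro k
    obtain ⟨_, j₀, hj₀⟩ := hP k
    obtain ⟨⟨i₁, hi₁⟩, _⟩ := hQ k
    have hC1 : 1 ≤ C k (topE j₀) := by have := hC k (topE j₀); omega
    have hBle : B top0 k ≤ S := by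
      calc B top0 k ≤ B top0 k * C k (topE j₀) := le_mul_of_one_le_right (hB _ _) hC1
        _ ≤ ∑ k', B top0 k' * C k' (topE j₀) :=
            Finset.single_le_sum (fun k' _ => mul_nonneg (hB _ _) (hC _ _)) (Finset.mem_univ k)
        _ = Mfib (2 * (p + 1) + 1) top0 (topE j₀) := (hAentry top0 (topE j₀)).symm
        _ ≤ S := by
            rw [Mfib_apply']
            exact fibZ_le_of_le 0 j₀.1 p (by omega) (by omega)
    have hX1 : 1 ≤ ∑ i : Fin (p + 1 + 1), B (botE i) k := by
      have h1 : 1 ≤ B (botE i₁) k := by have := hB (botE i₁) k; omega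
      calc (1 : ℤ) ≤ B (botE i₁) k := h1
        _ ≤ ∑ i : Fin (p + 1 + 1), B (botE i) k :=
            Finset.single_le_sum (fun i _ => hB _ _) (Finset.mem_univ i₁)
    nlinarith
  have hg : ∀ k, C k topn - S * ∑ j : Fin (p + 1 + 1), C k (botE j) ≤ 0 := by
    intro k
    obtain ⟨⟨i₀, hi₀⟩, _⟩ := hP k
    obtain ⟨_, j₁, hj₁⟩ := hQ k
    have hB1 : 1 ≤ B (topE i₀) k := by have := hB (topE i₀) k; omega
    have hCle : C k topn ≤ S := by
      calc C k topn ≤ B (topE i₀) k * C k topn := le_mul_of_one_le_left (hC _ _) hB1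
        _ ≤ ∑ k', B (topE i₀) k' * C k' topn :=
            Finset.single_le_sum (fun k' _ => mul_nonneg (hB _ _) (hC _ _)) (Finset.mem_univ k)
        _ = Mfib (2 * (p + 1) + 1) (topE i₀) topn := (hAentry (topE i₀) topn).symm
        _ ≤ S := by
            rw [Mfib_apply']
            exact fibZ_le_of_le i₀.1 (p + 1) p (by omega) (by omega)
    have hY1 : 1 ≤ ∑ j : Fin (p + 1 + 1), C k (botE j) := by
      have h1 : 1 ≤ C k (botE j₁) := by have := hC k (botE j₁); omega
      calc (1 : ℤ) ≤ C k (botE j₁) := h1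
        _ ≤ ∑ j : Fin (p + 1 + 1), C k (botE j) :=
            Finset.single_le_sum (fun j _ => hC _ _) (Finset.mem_univ j₁)
    nlinarith
  -- the bilinear sum is nonnegative
  have hsum_nonneg : (0 : ℤ) ≤ ∑ k, (B top0 k - S * ∑ i : Fin (p + 1 + 1), B (botE i) k)
      * (C k topn - S * ∑ j : Fin (p + 1 + 1), C k (botE j)) := by
    apply Finset.sum_nonneg
    intro k _
    have h := mul_nonneg (neg_nonneg.mpr (hf k)) (neg_nonneg.mpr (hg k))
    rw [neg_mul_neg] at h
    exact h
  -- expansion of the bilinear sum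
  have hexpand : ∑ k, (B top0 k - S * ∑ i : Fin (p + 1 + 1), B (botE i) k)
      * (C k topn - S * ∑ j : Fin (p + 1 + 1), C k (botE j))
      = Mfib (2 * (p + 1) + 1) top0 topn
        - S * (∑ j : Fin (p + 1 + 1), Mfib (2 * (p + 1) + 1) top0 (botE j))
        - S * (∑ i : Fin (p + 1 + 1), Mfib (2 * (p + 1) + 1) (botE i) topn)
        + S ^ 2 * (∑ i : Fin (p + 1 + 1), ∑ j : Fin (p + 1 + 1),
            Mfib (2 * (p + 1) + 1) (botE i) (botE j)) := by
    have e1 : ∀ k : Fin (r + 1),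
        (B top0 k - S * ∑ i : Fin (p + 1 + 1), B (botE i) k)
          * (C k topn - S * ∑ j : Fin (p + 1 + 1), C k (botE j))
        = B top0 k * C k topn
          - S * (B top0 k * ∑ j : Fin (p + 1 + 1), C k (botE j))
          - S * ((∑ i : Fin (p + 1 + 1), B (botE i) k) * C k topn)
          + S ^ 2 * ((∑ i : Fin (p + 1 + 1), B (botE i) k)
              * ∑ j : Fin (p + 1 + 1), C k (botE j)) := by
      intro k; ring
    rw [Finset.sum_congr rfl (fun k _ => e1 k)]
    rw [Finset.sum_add_distrib, Finset.sum_sub_distrib, Finset.sum_sub_distrib,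
      ← Finset.mul_sum, ← Finset.mul_sum, ← Finset.mul_sum]
    congr 1
    · congr 1
      · congr 1
        · exact (hAentry top0 topn).symm
        · congr 1
          calc ∑ k, B top0 k * ∑ j : Fin (p + 1 + 1), C k (botE j)
              = ∑ k, ∑ j : Fin (p + 1 + 1), B top0 k * C k (botE j) := by
                apply Finset.sum_congr rfl; intro k _; rw [Finset.mul_sum]
            _ = ∑ j : Fin (p + 1 + 1), ∑ k, B top0 k * C k (botE j) := Finset.sum_comm
            _ = ∑ j : Fin (p + 1 + 1), Mfib (2 * (p + 1) + 1) top0 (botE j) := by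
                apply Finset.sum_congr rfl; intro j _; exact (hAentry top0 (botE j)).symm
      · congr 1
        calc ∑ k, (∑ i : Fin (p + 1 + 1), B (botE i) k) * C k topn
            = ∑ k, ∑ i : Fin (p + 1 + 1), B (botE i) k * C k topn := by
              apply Finset.sum_congr rfl; intro k _; rw [Finset.sum_mul]
          _ = ∑ i : Fin (p + 1 + 1), ∑ k, B (botE i) k * C k topn := Finset.sum_comm
          _ = ∑ i : Fin (p + 1 + 1), Mfib (2 * (p + 1) + 1) (botE i) topn := by
              apply Finset.sum_congr rfl; intro i _; exact (hAentry (botE i) topn).symm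
    · congr 1
      calc ∑ k, (∑ i : Fin (p + 1 + 1), B (botE i) k) * ∑ j : Fin (p + 1 + 1), C k (botE j)
          = ∑ k, ∑ i : Fin (p + 1 + 1), ∑ j : Fin (p + 1 + 1),
              B (botE i) k * C k (botE j) := by
            apply Finset.sum_congr rfl; intro k _
            rw [Finset.sum_mul]
            apply Finset.sum_congr rfl; intro i _
            rw [Finset.mul_sum]
        _ = ∑ i : Fin (p + 1 + 1), ∑ j : Fin (p + 1 + 1), ∑ k,
              B (botE i) k * C k (botE j) := by
            rw [Finset.sum_comm]
            apply Finset.sum_congr rfl; intro i _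
            rw [Finset.sum_comm]
        _ = ∑ i : Fin (p + 1 + 1), ∑ j : Fin (p + 1 + 1),
              Mfib (2 * (p + 1) + 1) (botE i) (botE j) := by
            apply Finset.sum_congr rfl; intro i _
            apply Finset.sum_congr rfl; intro j _
            exact (hAentry (botE i) (botE j)).symm
  -- values of the four entry sums
  have hA0n : Mfib (2 * (p + 1) + 1) top0 topn = S := by
    rw [Mfib_apply']
    have harg : 2 * (((top0).1 : ℤ) - ((topn).1 : ℤ)) + 1 = -(2 * (p : ℤ) + 1) := by
      show 2 * (((0 : ℕ) : ℤ) - ((p + 1 : ℕ) : ℤ)) + 1 = -(2 * (p : ℤ) + 1)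
      push_cast; ring
    rw [harg, fibZ_negOdd]
  have hT1 : ∑ j : Fin (p + 1 + 1), Mfib (2 * (p + 1) + 1) top0 (botE j)
      = (Nat.fib (4 * p + 6) : ℤ) - (Nat.fib (2 * p + 2) : ℤ) := by
    have e : ∀ j : Fin (p + 1 + 1), Mfib (2 * (p + 1) + 1) top0 (botE j)
        = (Nat.fib (2 * ((p + 1) + j.1) + 1) : ℤ) := by
      intro j
      rw [Mfib_apply']
      have harg : 2 * (((top0).1 : ℤ) - (((botE j)).1 : ℤ)) + 1
          = -(2 * (((p + 1) + j.1 : ℕ) : ℤ) + 1) := by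
        show 2 * (((0 : ℕ) : ℤ) - ((j.1 + (p + 2) : ℕ) : ℤ)) + 1 = _
        push_cast; ring
      rw [harg, fibZ_negOdd]
    rw [Finset.sum_congr rfl (fun j _ => e j)]
    rw [Fin.sum_univ_eq_sum_range (fun t => (Nat.fib (2 * ((p + 1) + t) + 1) : ℤ)) (p + 1 + 1)]
    have hs := sum_fib_odd (p + 1) (p + 1 + 1)
    rw [hs]
    have h1 : 2 * ((p + 1) + (p + 1 + 1)) = 4 * p + 6 := by ring
    have h2 : 2 * (p + 1) = 2 * p + 2 := by ring
    rw [h1, h2]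
  have hT2 : (1 : ℤ) ≤ ∑ i : Fin (p + 1 + 1), Mfib (2 * (p + 1) + 1) (botE i) topn := by
    have h0 : (1 : ℤ) ≤ Mfib (2 * (p + 1) + 1) (botE 0) topn := by
      rw [Mfib_apply']
      have harg : 2 * ((((botE 0)).1 : ℤ) - ((topn).1 : ℤ)) + 1 = ((3 : ℕ) : ℤ) := by
        show 2 * ((((0 : Fin (p + 1 + 1)).1 + (p + 2) : ℕ) : ℤ) - ((p + 1 : ℕ) : ℤ)) + 1 = _
        simp only [Fin.val_zero]
        push_cast; ring
      rw [harg, fibZ_ofNat]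
      have := Nat.fib_pos.mpr (by omega : 0 < 3)
      exact_mod_cast this
    calc (1 : ℤ) ≤ Mfib (2 * (p + 1) + 1) (botE 0) topn := h0
      _ ≤ ∑ i : Fin (p + 1 + 1), Mfib (2 * (p + 1) + 1) (botE i) topn :=
          Finset.single_le_sum (fun i _ => Mfib_nonneg _ _ _) (Finset.mem_univ 0)
  have hE : ∑ i : Fin (p + 1 + 1), ∑ j : Fin (p + 1 + 1),
      Mfib (2 * (p + 1) + 1) (botE i) (botE j)
      = (Nat.fib (2 * p + 5) : ℤ) + (Nat.fib (2 * p + 3) : ℤ) - 2 := by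
    have e : ∀ i j : Fin (p + 1 + 1), Mfib (2 * (p + 1) + 1) (botE i) (botE j)
        = fibZ (2 * ((i.1 : ℤ) - (j.1 : ℤ)) + 1) := by
      intro i j
      rw [Mfib_apply']
      congr 1
      show 2 * (((i.1 + (p + 2) : ℕ) : ℤ) - ((j.1 + (p + 2) : ℕ) : ℤ)) + 1 = _
      push_cast; ring
    calc ∑ i : Fin (p + 1 + 1), ∑ j : Fin (p + 1 + 1),
          Mfib (2 * (p + 1) + 1) (botE i) (botE j)
        = ∑ i : Fin (p + 1 + 1), ∑ j : Fin (p + 1 + 1),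
            fibZ (2 * ((i.1 : ℤ) - (j.1 : ℤ)) + 1) := by
          apply Finset.sum_congr rfl; intro i _
          apply Finset.sum_congr rfl; intro j _
          exact e i j
      _ = ∑ i : Fin (p + 1 + 1), ∑ j ∈ Finset.range (p + 1 + 1),
            fibZ (2 * ((i.1 : ℤ) - (j : ℤ)) + 1) := by
          apply Finset.sum_congr rfl; intro i _
          exact Fin.sum_univ_eq_sum_range (fun t => fibZ (2 * ((i.1 : ℤ) - (t : ℤ)) + 1)) (p + 1 + 1)
      _ = ∑ i ∈ Finset.range (p + 1 + 1), ∑ j ∈ Finset.range (p + 1 + 1),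
            fibZ (2 * ((i : ℤ) - (j : ℤ)) + 1) :=
          Fin.sum_univ_eq_sum_range
            (fun t => ∑ j ∈ Finset.range (p + 1 + 1), fibZ (2 * ((t : ℤ) - (j : ℤ)) + 1)) (p + 1 + 1)
      _ = (Nat.fib (2 * (p + 1) + 3) : ℤ) + (Nat.fib (2 * (p + 1) + 1) : ℤ) - 2 := total_sum (p + 1)
      _ = (Nat.fib (2 * p + 5) : ℤ) + (Nat.fib (2 * p + 3) : ℤ) - 2 := by
          have h1 : 2 * (p + 1) + 3 = 2 * p + 5 := by ring
          have h2 : 2 * (p + 1) + 1 = 2 * p + 3 := by ring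
          rw [h1, h2]
  -- combine
  rw [hexpand, hA0n, hT1, hE] at hsum_nonneg
  have hki := key_ineq p
  have hmul := mul_le_mul_of_nonneg_left hki (by linarith : (0 : ℤ) ≤ S)
  have hT2' : S ≤ S * ∑ i : Fin (p + 1 + 1), Mfib (2 * (p + 1) + 1) (botE i) topn :=
    le_mul_of_one_le_right (by linarith) hT2
  nlinarith [hsum_nonneg, hmul, hT2', hS1]


/-- For every `n ≥ 1`, `rank_{ℤ₊}(M_{2n+1}) ≥ rank_{ℤ₊}(M_n) + 1`. -/
theorem nnIntRank_Mfib_growth (n : ℕ) (hn : 1 ≤ n) :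
    nnIntRank (Mfib n) + 1 ≤ nnIntRank (Mfib (2 * n + 1)) := by
  obtain ⟨p, rfl⟩ : ∃ p, n = p + 1 := ⟨n - 1, by omega⟩
  have hne : {r : ℕ | ∃ (B : Matrix (Fin (2 * (p + 1) + 1 + 1)) (Fin r) ℤ)
      (C : Matrix (Fin r) (Fin (2 * (p + 1) + 1 + 1)) ℤ),
      (∀ i j, 0 ≤ B i j) ∧ (∀ i j, 0 ≤ C i j) ∧ Mfib (2 * (p + 1) + 1) = B * C}.Nonempty := by
    refine ⟨2 * (p + 1) + 1 + 1, Mfib (2 * (p + 1) + 1), 1, fun i j => Mfib_nonneg _ i j, ?_, ?_⟩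
    · intro i j
      by_cases h : i = j <;> simp [Matrix.one_apply, h]
    · exact (Matrix.mul_one _).symm
  have hmem : nnIntRank (Mfib (2 * (p + 1) + 1)) ∈ {r : ℕ |
      ∃ (B : Matrix (Fin (2 * (p + 1) + 1 + 1)) (Fin r) ℤ)
        (C : Matrix (Fin r) (Fin (2 * (p + 1) + 1 + 1)) ℤ),
      (∀ i j, 0 ≤ B i j) ∧ (∀ i j, 0 ≤ C i j) ∧ Mfib (2 * (p + 1) + 1) = B * C} :=
    Nat.sInf_mem hne
  obtain ⟨B, C, hB, hC, hBC⟩ := hmem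
  exact main_aux p _ B C hB hC hBC


end
end

section
/- For every k ∈ ℕ there exists a nonnegative integer matrix M with rank₊(M) = 2 and rank_{ℤ₊}(M) ≥ k. In particular, the ratio rank₊(M)/rank_{ℤ₊}(M) over nonnegative integer matrices M can be made arbitrarily close to zero, even when restricted to matrices with rank₊(M) = 2. -/
open Matrix BigOperators

noncomputable section

namespace NNGap

/-- Odd-index Fibonacci numbers `F₋₁, F₁, F₃, F₅, … = 1, 1, 2, 5, 13, …`. -/
def g : ℕ → ℤ
  | 0 => 1
  | 1 => 1
  | k + 2 => 3 * g (k + 1) - g k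

/-- Even-index Fibonacci numbers `F₀, F₂, F₄, … = 0, 1, 3, 8, …`. -/
def h : ℕ → ℤ
  | 0 => 0
  | 1 => 1
  | k + 2 => 3 * h (k + 1) - h k

lemma g_rec (k : ℕ) : g (k + 2) = 3 * g (k + 1) - g k := rfl
lemma h_rec (k : ℕ) : h (k + 2) = 3 * h (k + 1) - h k := rfl

lemma g_pos_mono : ∀ k, 1 ≤ g k ∧ g k ≤ g (k + 1) := by
  intro k
  induction k with
  | zero => exact ⟨le_refl 1, le_refl 1⟩
  | succ k ih =>
    obtain ⟨h1, h2⟩ := ih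
    refine ⟨by linarith, ?_⟩
    rw [g_rec]; linarith

lemma one_le_g (k : ℕ) : 1 ≤ g k := (g_pos_mono k).1

lemma two_le_g (k : ℕ) (hk : 2 ≤ k) : 2 ≤ g k := by
  obtain ⟨m, rfl⟩ : ∃ m, k = m + 2 := ⟨k - 2, by omega⟩
  have h1 := g_pos_mono m
  have h2 := g_pos_mono (m + 1)
  rw [g_rec]; linarith

lemma h_props : ∀ k, 0 ≤ h k ∧ h k + 1 ≤ h (k + 1) := by
  intro k
  induction k with
  | zero => exact ⟨le_refl 0, le_refl 1⟩
  | succ k ih =>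
    obtain ⟨h1, h2⟩ := ih
    refine ⟨by linarith, ?_⟩
    rw [h_rec]; linarith

lemma h_nonneg (k : ℕ) : 0 ≤ h k := (h_props k).1

lemma one_le_h (k : ℕ) (hk : 1 ≤ k) : 1 ≤ h k := by
  obtain ⟨m, rfl⟩ : ∃ m, k = m + 1 := ⟨k - 1, by omega⟩
  have := h_props m
  linarith [this.1, this.2]

/-- The doubly infinite sequence `T d = F_{|2d+1|}` (Fibonacci), satisfying
`T (d+1) = 3 T d - T (d-1)` for all integers `d`, with `T 0 = T (-1) = 1`. -/
def T (d : ℤ) : ℤ := if 0 ≤ d then g (d.toNat + 1) else g ((-d).toNat)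

lemma T_coe (m : ℕ) : T (m : ℤ) = g (m + 1) := by
  unfold T
  rw [if_pos (Int.natCast_nonneg m)]
  simp

lemma T_neg (m : ℕ) (hm : 1 ≤ m) : T (-(m : ℤ)) = g m := by
  unfold T
  rw [if_neg (by omega)]
  simp

lemma one_le_T (d : ℤ) : 1 ≤ T d := by
  unfold T
  split <;> exact one_le_g _

lemma T_zero : T 0 = 1 := by decide
lemma T_negone : T (-1) = 1 := by decide
lemma T_one : T 1 = 2 := by decide

lemma two_le_T (d : ℤ) (hd : d ≤ -2) : 2 ≤ T d := by
  unfold T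
  rw [if_neg (by omega)]
  exact two_le_g _ (by omega)

lemma Trec (d : ℤ) : T (d + 1) + T (d - 1) = 3 * T d := by
  obtain hd | hd := le_or_gt 0 d
  · obtain ⟨m, rfl⟩ := Int.eq_ofNat_of_zero_le hd
    cases m with
    | zero => decide
    | succ j =>
      have e1 : ((j + 1 : ℕ) : ℤ) + 1 = ((j + 2 : ℕ) : ℤ) := by push_cast; ring
      have e2 : ((j + 1 : ℕ) : ℤ) - 1 = ((j : ℕ) : ℤ) := by push_cast; ring
      rw [e1, e2, T_coe, T_coe, T_coe, g_rec (j + 1)]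
      ring
  · obtain ⟨m, hm, rfl⟩ : ∃ m : ℕ, 1 ≤ m ∧ d = -(m : ℤ) :=
      ⟨(-d).toNat, by omega, by omega⟩
    match m, hm with
    | 1, _ => decide
    | (j + 2), _ =>
      have e1 : -((j + 2 : ℕ) : ℤ) + 1 = -((j + 1 : ℕ) : ℤ) := by push_cast; ring
      have e2 : -((j + 2 : ℕ) : ℤ) - 1 = -((j + 3 : ℕ) : ℤ) := by push_cast; ring
      rw [e1, e2, T_neg (j + 1) (by omega), T_neg (j + 3) (by omega),
        T_neg (j + 2) (by omega), g_rec (j + 1)]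
      ring

lemma Klem (m : ℕ) : ∀ d : ℤ, h (m + 1) * T (d + 1) - h m * T d = T (d + m + 1) := by
  induction m with
  | zero =>
    intro d
    have h1 : h 1 = 1 := rfl
    have h0 : h 0 = 0 := rfl
    have e : d + ((0 : ℕ) : ℤ) + 1 = d + 1 := by push_cast; ring
    rw [e, h1, h0]; ring
  | succ m ih =>
    intro d
    have ec : ((m + 1 : ℕ) : ℤ) = (m : ℤ) + 1 := by push_cast; ring
    rw [ec, show d + ((m : ℤ) + 1) + 1 = (d + 1) + (m : ℤ) + 1 from by ring,
      ← ih (d + 1), show d + 1 + 1 = d + 2 from by ring,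
      show (m : ℕ) + 1 + 1 = m + 2 from rfl, h_rec m]
    have trec := Trec (d + 1)
    rw [show d + 1 + 1 = d + 2 from by ring, show d + 1 - 1 = d from by ring] at trec
    linear_combination (-(h (m + 1))) * trec

lemma Llem : ∀ b a : ℕ, ∀ e : ℤ,
    h (a + b) * T e = h a * T (e - b) + h b * T (e + a) := by
  have main : ∀ b : ℕ,
      (∀ a : ℕ, ∀ e : ℤ, h (a + b) * T e = h a * T (e - b) + h b * T (e + a)) ∧
      (∀ a : ℕ, ∀ e : ℤ, h (a + (b + 1)) * T e
        = h a * T (e - (b + 1)) + h (b + 1) * T (e + a)) := by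
    intro b
    induction b with
    | zero =>
      constructor
      · intro a e
        have h0 : h 0 = 0 := rfl
        simp [h0]
      · intro a e
        have h1 : h 1 = 1 := rfl
        have hK := Klem a (e - 1)
        rw [show e - 1 + 1 = e from by ring,
          show e - 1 + (a : ℤ) + 1 = e + (a : ℤ) from by ring] at hK
        push_cast
        rw [h1]
        linarith [hK]
    | succ b ih =>
      obtain ⟨ihb, ihb1⟩ := ih
      refine ⟨ihb1, ?_⟩
      intro a e
      have hb := ihb a e
      have hb1 := ihb1 a e
      rw [show a + (b + 1) = a + b + 1 from by ring] at hb1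
      have trec := Trec (e - ((b : ℤ) + 1))
      rw [show e - ((b : ℤ) + 1) + 1 = e - (b : ℤ) from by ring,
        show e - ((b : ℤ) + 1) - 1 = e - ((b : ℤ) + 2) from by ring] at trec
      push_cast
      rw [show b + 1 + 1 = b + 2 from rfl,
        show e - ((b : ℤ) + 1 + 1) = e - ((b : ℤ) + 2) from by ring,
        show a + (b + 2) = (a + b) + 2 from by ring, h_rec (a + b), h_rec b]
      linear_combination 3 * hb1 - hb - h a * trec
  intro b a e
  exact (main b).1 a e



/-- Our explicit matrix: `MT n i j = T (i - j)`, the Fibonacci staircase matrix. -/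
def MT (n : ℕ) : Matrix (Fin (n + 1)) (Fin (n + 1)) ℤ :=
  fun i j => T (((i : ℕ) : ℤ) - ((j : ℕ) : ℤ))

lemma MT_nonneg (n : ℕ) (i j : Fin (n + 1)) : 0 ≤ MT n i j :=
  le_trans zero_le_one (one_le_T _)

lemma MT_diag (n : ℕ) (a : Fin (n + 1)) : MT n a a = 1 := by
  unfold MT; rw [sub_self]; exact T_zero

lemma MT_two (n : ℕ) (a b : Fin (n + 1)) (hab : (a : ℕ) + 2 ≤ (b : ℕ)) :
    2 ≤ MT n a b := by
  apply two_le_T; omega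

/-- If a finite sum of products of nonnegative integers equals 1, one term equals 1
(with both factors 1) and all the others vanish. -/
lemma sum_one {r : ℕ} (f : Fin r → ℤ) (h0 : ∀ s, 0 ≤ f s) (h1 : ∑ s, f s = 1) :
    ∃ s₀, f s₀ = 1 ∧ ∀ s, s ≠ s₀ → f s = 0 := by
  have hex : ∃ s₀, f s₀ ≠ 0 := by
    by_contra hc
    push_neg at hc
    rw [Finset.sum_eq_zero (fun s _ => hc s)] at h1
    norm_num at h1
  obtain ⟨s₀, hs₀⟩ := hex
  have hf1 : 1 ≤ f s₀ := by have := h0 s₀; omega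
  have hrest : ∑ s ∈ Finset.univ.erase s₀, f s = 1 - f s₀ := by
    have := Finset.add_sum_erase Finset.univ f (Finset.mem_univ s₀)
    linarith [h1, this]
  have hnn : 0 ≤ ∑ s ∈ Finset.univ.erase s₀, f s :=
    Finset.sum_nonneg (fun s _ => h0 s)
  have hfe : f s₀ = 1 := by linarith
  have hzero : ∀ s ∈ Finset.univ.erase s₀, f s = 0 := by
    rw [hfe] at hrest
    intro s hs
    exact (Finset.sum_eq_zero_iff_of_nonneg (fun t _ => h0 t)).mp (by linarith) s hs
  exact ⟨s₀, hfe, fun s hs => hzero s (Finset.mem_erase.mpr ⟨hs, Finset.mem_univ s⟩)⟩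

/-- Key lower bound: any nonnegative integer factorization of `MT n` with
`n + 1 = k * 2 ^ (k + 1)` has inner dimension at least `k`. -/
lemma key (k n r : ℕ) (hk : 1 ≤ k) (hn : n + 1 = k * 2 ^ (k + 1))
    (B : Matrix (Fin (n + 1)) (Fin r) ℤ) (C : Matrix (Fin r) (Fin (n + 1)) ℤ)
    (hB : ∀ i s, 0 ≤ B i s) (hC : ∀ s j, 0 ≤ C s j) (hM : MT n = B * C) : k ≤ r := by
  by_contra hr
  push_neg at hr
  -- diagonal analysis
  have diag : ∀ a : Fin (n + 1), ∃ s₀ : Fin r,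
      (B a s₀ = 1 ∧ C s₀ a = 1) ∧ ∀ s, s ≠ s₀ → B a s * C s a = 0 := by
    intro a
    have hsum : ∑ s, B a s * C s a = 1 := by
      have := congrFun (congrFun hM a) a
      rw [MT_diag, Matrix.mul_apply] at this
      exact this.symm
    obtain ⟨s₀, h1, h2⟩ := sum_one (fun s => B a s * C s a)
      (fun s => mul_nonneg (hB a s) (hC s a)) hsum
    refine ⟨s₀, ?_, h2⟩
    rcases Int.mul_eq_one_iff_eq_one_or_neg_one.mp h1 with ⟨e1, e2⟩ | ⟨e1, _⟩
    · exact ⟨e1, e2⟩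
    · exact absurd (hB a s₀) (by rw [e1]; norm_num)
  choose α hα1 hα3 using diag
  -- the key exclusion: rows with equal support and distance ≥ 2 have distinct owners
  have claim : ∀ a b : Fin (n + 1),
      (∀ s, B a s ≠ 0 ↔ B b s ≠ 0) → (a : ℕ) + 2 ≤ (b : ℕ) → α a ≠ α b := by
    intro a b hsupp hab hEq
    have hsum : MT n a b = ∑ s, B a s * C s b := by
      rw [hM, Matrix.mul_apply]
    have hzero : ∀ s ∈ Finset.univ, s ≠ α b → B a s * C s b = 0 := by
      intro s _ hs
      by_cases hBas : B a s = 0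
      · rw [hBas, zero_mul]
      · have hBbs : B b s ≠ 0 := (hsupp s).mp hBas
        have := hα3 b s hs
        rcases mul_eq_zero.mp this with hc | hc
        · exact absurd hc hBbs
        · rw [hc, mul_zero]
    have hval : MT n a b = B a (α b) * C (α b) b := by
      rw [hsum]
      exact Finset.sum_eq_single (α b) hzero (fun hmem => absurd (Finset.mem_univ _) hmem)
    rw [(hα1 b).2, mul_one, ← hEq, (hα1 a).1] at hval
    have := MT_two n a b hab
    omega
  -- pigeonhole on supports
  have hcard : (Finset.univ : Finset (Finset (Fin r))).card * (2 * k - 1)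
      < (Finset.univ : Finset (Fin (n + 1))).card := by
    rw [Finset.card_univ, Finset.card_univ, Fintype.card_finset, Fintype.card_fin,
      Fintype.card_fin, hn]
    have h2r : 2 ^ r ≤ 2 ^ (k - 1) := Nat.pow_le_pow_right (by norm_num) (by omega)
    have hpow : 2 ^ (k + 1) = 4 * 2 ^ (k - 1) := by
      have hkk : k + 1 = (k - 1) + 2 := by omega
      rw [hkk, pow_add]
      ring
    rw [hpow]
    have hp1 : 1 ≤ 2 ^ (k - 1) := Nat.one_le_two_pow
    calc 2 ^ r * (2 * k - 1) ≤ 2 ^ (k - 1) * (2 * k - 1) :=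
          Nat.mul_le_mul_right _ h2r
      _ < 2 ^ (k - 1) * (4 * k) := by
          have h1 : 0 < 2 ^ (k - 1) := by omega
          have h2 : 2 * k - 1 < 4 * k := by omega
          exact mul_lt_mul_of_pos_left h2 h1
      _ = k * (4 * 2 ^ (k - 1)) := by ring
  obtain ⟨S₀, -, hS₀⟩ := Finset.exists_lt_card_fiber_of_mul_lt_card_of_maps_to
    (f := fun a : Fin (n + 1) => Finset.univ.filter (fun s => B a s ≠ 0))
    (fun a _ => Finset.mem_univ _) hcard
  set F := ({a ∈ Finset.univ | Finset.univ.filter (fun s => B a s ≠ 0) = S₀} :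
    Finset (Fin (n + 1))) with hF
  have hFcard : 2 * k ≤ F.card := by omega
  have hsuppF : ∀ a ∈ F, Finset.univ.filter (fun s => B a s ≠ 0) = S₀ := by
    intro a ha
    rw [hF, Finset.mem_filter] at ha
    exact ha.2
  -- split by parity; one class has ≥ k elements, and is pairwise at distance ≥ 2
  have hpar := Finset.card_filter_add_card_filter_not
    (s := F) (p := fun a : Fin (n + 1) => (a : ℕ) % 2 = 0)
  have hone : ∃ G : Finset (Fin (n + 1)), G ⊆ F ∧ k ≤ G.card ∧
      ∀ a ∈ G, ∀ b ∈ G, (a : ℕ) % 2 = (b : ℕ) % 2 := by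
    rcases Nat.le_total k (F.filter (fun a : Fin (n + 1) => (a : ℕ) % 2 = 0)).card with h | h
    · refine ⟨F.filter (fun a : Fin (n + 1) => (a : ℕ) % 2 = 0), Finset.filter_subset _ _, h, ?_⟩
      intro a ha b hb
      have h1 := (Finset.mem_filter.mp ha).2
      have h2 := (Finset.mem_filter.mp hb).2
      omega
    · refine ⟨F.filter (fun a : Fin (n + 1) => ¬((a : ℕ) % 2 = 0)), Finset.filter_subset _ _, by omega, ?_⟩
      intro a ha b hb
      have h1 := (Finset.mem_filter.mp ha).2
      have h2 := (Finset.mem_filter.mp hb).2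
      omega
  obtain ⟨G, hGF, hGcard, hGpar⟩ := hone
  -- α is injective on G
  have hinj : ∀ a ∈ G, ∀ b ∈ G, α a = α b → a = b := by
    intro a ha b hb hab
    by_contra hne
    have hdist : (a : ℕ) + 2 ≤ (b : ℕ) ∨ (b : ℕ) + 2 ≤ (a : ℕ) := by
      have := hGpar a ha b hb
      have hvne : (a : ℕ) ≠ (b : ℕ) := fun hc => hne (Fin.ext hc)
      omega
    have hsupp : ∀ s, B a s ≠ 0 ↔ B b s ≠ 0 := by
      intro s
      constructor <;> intro hs
      · have hmem : s ∈ Finset.univ.filter (fun s => B a s ≠ 0) :=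
          Finset.mem_filter.mpr ⟨Finset.mem_univ _, hs⟩
        rw [hsuppF a (hGF ha), ← hsuppF b (hGF hb)] at hmem
        exact (Finset.mem_filter.mp hmem).2
      · have hmem : s ∈ Finset.univ.filter (fun s => B b s ≠ 0) :=
          Finset.mem_filter.mpr ⟨Finset.mem_univ _, hs⟩
        rw [hsuppF b (hGF hb), ← hsuppF a (hGF ha)] at hmem
        exact (Finset.mem_filter.mp hmem).2
    rcases hdist with hd | hd
    · exact claim a b hsupp hd hab
    · exact claim b a (fun s => (hsupp s).symm) hd hab.symm
  have hcardG : G.card ≤ (Finset.univ : Finset (Fin r)).card :=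
    Finset.card_le_card_of_injOn α (fun a _ => Finset.mem_univ _) hinj
  rw [Finset.card_univ, Fintype.card_fin] at hcardG
  omega

lemma hn_pos (n : ℕ) (hn : 1 ≤ n) : (0 : ℝ) < (h n : ℝ) := by
  exact_mod_cast lt_of_lt_of_le zero_lt_one (one_le_h n hn)

/-- The rational rank-2 nonnegative factorization of `MT n`. -/
lemma nnRank_MT (n : ℕ) (hn : 1 ≤ n) : nnRank (MT n) = 2 := by
  unfold nnRank
  set S := {r : ℕ | ∃ (B : Matrix (Fin (n+1)) (Fin r) ℝ) (C : Matrix (Fin r) (Fin (n+1)) ℝ),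
    (∀ i j, 0 ≤ B i j) ∧ (∀ i j, 0 ≤ C i j) ∧
      (MT n).map (fun z => (z : ℝ)) = B * C} with hS
  have mem2 : 2 ∈ S := by
    refine ⟨fun i => ![(h (n - (i : ℕ)) : ℝ) / (h n : ℝ), (h (i : ℕ) : ℝ) / (h n : ℝ)],
      ![fun j => ((T (0 - ((j : ℕ) : ℤ)) : ℤ) : ℝ),
        fun j => ((T ((n : ℤ) - ((j : ℕ) : ℤ)) : ℤ) : ℝ)], ?_, ?_, ?_⟩
    · intro i t
      fin_cases t <;> simp <;>
        exact div_nonneg (by exact_mod_cast h_nonneg _) (by exact_mod_cast h_nonneg n)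
    · intro t j
      fin_cases t <;> simp <;> exact_mod_cast le_trans zero_le_one (one_le_T _)
    · refine Matrix.ext fun i j => ?_
      rw [Matrix.map_apply]; erw [Matrix.mul_apply]; rw [Fin.sum_univ_two]
      simp only [Matrix.cons_val_zero, Matrix.cons_val_one, Matrix.head_cons]
      have hle : (i : ℕ) ≤ n := Nat.lt_succ_iff.mp i.isLt
      have hL := Llem (i : ℕ) (n - (i : ℕ)) (((i : ℕ) : ℤ) - ((j : ℕ) : ℤ))
      rw [Nat.sub_add_cancel hle] at hL
      rw [show ((n - (i : ℕ) : ℕ) : ℤ) = (n : ℤ) - ((i : ℕ) : ℤ) from by omega] at hL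
      rw [show (((i : ℕ) : ℤ) - ((j : ℕ) : ℤ)) - ((i : ℕ) : ℤ) = 0 - ((j : ℕ) : ℤ) from by
        ring] at hL
      rw [show (((i : ℕ) : ℤ) - ((j : ℕ) : ℤ)) + ((n : ℤ) - ((i : ℕ) : ℤ))
        = (n : ℤ) - ((j : ℕ) : ℤ) from by ring] at hL
      have hpos := hn_pos n hn
      rw [div_mul_eq_mul_div, div_mul_eq_mul_div, ← add_div,
        eq_div_iff (ne_of_gt hpos)]
      simp only [MT]
      have hLr := congrArg (fun z : ℤ => (z : ℝ)) hL
      push_cast at hLr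
      linarith [hLr]
  have not0 : (0 : ℕ) ∉ S := by
    rintro ⟨B, C, -, -, hM⟩
    have := congrFun (congrFun hM 0) 0
    rw [Matrix.map_apply, Matrix.mul_apply, MT_diag] at this
    simp at this
  have not1 : (1 : ℕ) ∉ S := by
    rintro ⟨B, C, -, -, hM⟩
    have h0 : (0 : ℕ) < n + 1 := by omega
    have h1 : (1 : ℕ) < n + 1 := by omega
    set a0 : Fin (n + 1) := ⟨0, h0⟩
    set a1 : Fin (n + 1) := ⟨1, h1⟩
    have e00 := congrFun (congrFun hM a0) a0
    have e01 := congrFun (congrFun hM a0) a1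
    have e10 := congrFun (congrFun hM a1) a0
    have e11 := congrFun (congrFun hM a1) a1
    rw [Matrix.map_apply, Matrix.mul_apply, Fin.sum_univ_one] at e00 e01 e10 e11
    have v00 : MT n a0 a0 = 1 := MT_diag n a0
    have v11 : MT n a1 a1 = 1 := MT_diag n a1
    have v01 : MT n a0 a1 = 1 := by
      show T (((0 : ℕ) : ℤ) - ((1 : ℕ) : ℤ)) = 1
      rw [show ((0 : ℕ) : ℤ) - ((1 : ℕ) : ℤ) = -1 from by norm_num]
      exact T_negone
    have v10 : MT n a1 a0 = 2 := by
      show T (((1 : ℕ) : ℤ) - ((0 : ℕ) : ℤ)) = 2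
      rw [show ((1 : ℕ) : ℤ) - ((0 : ℕ) : ℤ) = 1 from by norm_num]
      exact T_one
    rw [v00] at e00; rw [v01] at e01; rw [v10] at e10; rw [v11] at e11
    push_cast at e00 e01 e10 e11
    have hcontra : (1 : ℝ) * 1 = 1 * 2 := by
      calc (1 : ℝ) * 1 = (B a0 0 * C 0 a0) * (B a1 0 * C 0 a1) := by rw [← e00, ← e11]
        _ = (B a0 0 * C 0 a1) * (B a1 0 * C 0 a0) := by ring
        _ = 1 * 2 := by rw [← e01, ← e10]
    norm_num at hcontra
  have hne : S.Nonempty := ⟨2, mem2⟩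
  have hmem := Nat.sInf_mem hne
  have hle : sInf S ≤ 2 := Nat.sInf_le mem2
  rcases Nat.lt_or_ge (sInf S) 2 with hlt | hge
  · have : sInf S = 0 ∨ sInf S = 1 := by omega
    rcases this with hc | hc <;> rw [hc] at hmem
    · exact absurd hmem not0
    · exact absurd hmem not1
  · omega

/-- Master lemma: the matrix `MT (k * 2^(k+1) - 1)` works for the target `k`. -/
lemma master (k : ℕ) (hk : 1 ≤ k) :
    ∃ (a b : ℕ) (M : Matrix (Fin a) (Fin b) ℤ),
      (∀ i j, 0 ≤ M i j) ∧ nnRank M = 2 ∧ k ≤ nnIntRank M := by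
  have hpow : 4 ≤ 2 ^ (k + 1) := by
    calc (4 : ℕ) = 2 ^ 2 := by norm_num
      _ ≤ 2 ^ (k + 1) := Nat.pow_le_pow_right (by norm_num) (by omega)
  set n : ℕ := k * 2 ^ (k + 1) - 1 with hn
  have hn1 : n + 1 = k * 2 ^ (k + 1) := by
    have : 4 ≤ k * 2 ^ (k + 1) := le_trans hpow (Nat.le_mul_of_pos_left _ (by omega))
    omega
  have hnge : 1 ≤ n := by
    have : 4 ≤ k * 2 ^ (k + 1) := le_trans hpow (Nat.le_mul_of_pos_left _ (by omega))
    omega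
  refine ⟨n + 1, n + 1, MT n, MT_nonneg n, nnRank_MT n hnge, ?_⟩
  unfold nnIntRank
  set S' := {r : ℕ | ∃ (B : Matrix (Fin (n+1)) (Fin r) ℤ) (C : Matrix (Fin r) (Fin (n+1)) ℤ),
    (∀ i j, 0 ≤ B i j) ∧ (∀ i j, 0 ≤ C i j) ∧ MT n = B * C} with hS'
  have hne : S'.Nonempty := by
    refine ⟨n + 1, MT n, 1, MT_nonneg n, ?_, (Matrix.mul_one _).symm⟩
    intro i j
    rw [Matrix.one_apply]
    split <;> norm_num
  have hall : ∀ r ∈ S', k ≤ r := by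
    rintro r ⟨B, C, hB, hC, hM⟩
    exact key k n r hk hn1 B C hB hC hM
  exact hall _ (Nat.sInf_mem hne)

end NNGap

/-- For every `k` there is a nonnegative integer matrix with nonnegative
rank `2` and nonnegative integer rank at least `k`; in particular the ratio
`rank₊/rank_{ℤ₊}` can be made arbitrarily close to zero, even among matrices of
nonnegative rank `2`. -/
theorem nnRank_nnIntRank_gap :
    (∀ k : ℕ, ∃ (a b : ℕ) (M : Matrix (Fin a) (Fin b) ℤ),
      (∀ i j, 0 ≤ M i j) ∧ nnRank M = 2 ∧ k ≤ nnIntRank M) ∧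
    (∀ ε : ℝ, 0 < ε → ∃ (a b : ℕ) (M : Matrix (Fin a) (Fin b) ℤ),
      (∀ i j, 0 ≤ M i j) ∧ nnRank M = 2 ∧ (nnRank M : ℝ) / (nnIntRank M : ℝ) < ε) := by
  constructor
  · intro k
    obtain ⟨a, b, M, h1, h2, h3⟩ := NNGap.master (max k 1) (le_max_right k 1)
    exact ⟨a, b, M, h1, h2, le_trans (le_max_left k 1) h3⟩
  · intro ε hε
    obtain ⟨k, hk⟩ := exists_nat_gt (2 / ε)
    have hk1 : 1 ≤ k := by
      rcases Nat.eq_zero_or_pos k with h0 | h1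
      · rw [h0] at hk
        norm_num at hk
        exact absurd hk (not_lt.mpr (le_of_lt (div_pos (by norm_num) hε)))
      · exact h1
    obtain ⟨a, b, M, h1, h2, h3⟩ := NNGap.master k hk1
    refine ⟨a, b, M, h1, h2, ?_⟩
    rw [h2]
    have hN : (k : ℝ) ≤ (nnIntRank M : ℝ) := by exact_mod_cast h3
    have hkpos : (0 : ℝ) < (k : ℝ) := by exact_mod_cast hk1
    have step1 : ((2 : ℕ) : ℝ) / (nnIntRank M : ℝ) ≤ ((2 : ℕ) : ℝ) / (k : ℝ) := by
      gcongr
    have step2 : ((2 : ℕ) : ℝ) / (k : ℝ) < ε := by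
      rw [div_lt_iff₀ hkpos]
      have h4 := (div_lt_iff₀ hε).mp hk
      push_cast
      linarith
    exact lt_of_le_of_lt step1 step2


end
end

section
/- For every k ∈ ℕ there exists a 2-dimensional positive affine semigroup Γ (i.e. span(Γ) has dimension 2) such that every lift of Γ has size at least k. -/
open Matrix BigOperators

noncomputable section

-- ===== Pell-type sequences =====
/-- Pell pair: (x+y√2) = (3+2√2)^d. -/
def pell : ℕ → ℤ × ℤ
  | 0 => (1, 0)
  | (d+1) => (3 * (pell d).1 + 4 * (pell d).2, 2 * (pell d).1 + 3 * (pell d).2)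

/-- Pell `x` sequence. -/
def pellX (d : ℕ) : ℤ := (pell d).1
/-- Pell `y` sequence. -/
def pellY (d : ℕ) : ℤ := (pell d).2

lemma pellX_succ (d : ℕ) : pellX (d+1) = 3 * pellX d + 4 * pellY d := rfl
lemma pellY_succ (d : ℕ) : pellY (d+1) = 2 * pellX d + 3 * pellY d := rfl
lemma pellX_zero : pellX 0 = 1 := rfl
lemma pellY_zero : pellY 0 = 0 := rfl

lemma pellX_pos : ∀ d, 1 ≤ pellX d ∧ 0 ≤ pellY d := by
  intro d
  induction d with
  | zero => simp [pellX_zero, pellY_zero]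
  | succ d ih => rw [pellX_succ, pellY_succ]; constructor <;> omega

lemma pellX_ge_three {d : ℕ} (hd : d ≠ 0) : 3 ≤ pellX d := by
  obtain ⟨e, rfl⟩ : ∃ e, d = e + 1 := ⟨d - 1, by omega⟩
  have h := pellX_pos e
  rw [pellX_succ]; omega

/-- Key multiplication identity. -/
lemma pell_mul (d : ℕ) : ∀ i : ℕ,
    pellX (i + d) * pellX i - 2 * pellY (i + d) * pellY i = pellX d ∧
    pellY (i + d) * pellX i - pellX (i + d) * pellY i = pellY d := by
  intro i
  induction i with
  | zero => simp [pellX_zero, pellY_zero]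
  | succ i ih =>
    have h1 : i + 1 + d = (i + d) + 1 := by omega
    rw [h1, pellX_succ, pellY_succ, pellX_succ, pellY_succ]
    obtain ⟨e1, e2⟩ := ih
    constructor
    · nlinarith [e1, e2]
    · nlinarith [e1, e2]

/-- The pairing value: symmetric in its arguments. -/
def pellT (i j : ℕ) : ℤ := pellX i * pellX j - 2 * pellY i * pellY j

lemma pellT_eq (i j : ℕ) (h : j ≤ i) : pellT i j = pellX (i - j) := by
  have := (pell_mul (i - j) j).1
  rw [show j + (i - j) = i by omega] at this
  unfold pellT; linarith [this]

lemma pellT_symm (i j : ℕ) : pellT i j = pellT j i := by unfold pellT; ring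

lemma pellT_diag (i : ℕ) : pellT i i = 1 := by
  rw [pellT_eq i i (le_refl i)]; simp [pellX_zero]

lemma pellT_off {i j : ℕ} (h : i ≠ j) : 3 ≤ pellT i j := by
  rcases le_total j i with hle | hle
  · rw [pellT_eq i j hle]; exact pellX_ge_three (by omega)
  · rw [pellT_symm, pellT_eq j i hle]; exact pellX_ge_three (by omega)

lemma pellT_pos (i j : ℕ) : 0 < pellT i j := by
  rcases eq_or_ne i j with rfl | h
  · rw [pellT_diag]; norm_num
  · have := pellT_off h; omega

-- ===== Multiset helper lemmas =====
set_option linter.unusedSectionVars false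
variable {α : Type*} [DecidableEq α]

lemma msum_nonneg (s : Multiset α) (f : α → ℤ) (h : ∀ a ∈ s, 0 ≤ f a) :
    0 ≤ (s.map f).sum := by
  induction s using Multiset.induction with
  | empty => simp
  | cons a s ih =>
    simp only [Multiset.map_cons, Multiset.sum_cons]
    have h1 := h a (Multiset.mem_cons_self a s)
    have h2 := ih (fun b hb => h b (Multiset.mem_cons_of_mem hb))
    omega

lemma msum_eq_zero (s : Multiset α) (f : α → ℤ) (h : ∀ a ∈ s, 0 ≤ f a)
    (hs : (s.map f).sum = 0) : ∀ a ∈ s, f a = 0 := by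
  induction s using Multiset.induction with
  | empty => simp
  | cons a s ih =>
    simp only [Multiset.map_cons, Multiset.sum_cons] at hs
    have h1 := h a (Multiset.mem_cons_self a s)
    have h2 := msum_nonneg s f (fun b hb => h b (Multiset.mem_cons_of_mem hb))
    intro b hb
    rcases Multiset.mem_cons.1 hb with rfl | hb'
    · omega
    · exact ih (fun c hc => h c (Multiset.mem_cons_of_mem hc)) (by omega) b hb'

lemma msum_nonpos (s : Multiset α) (f : α → ℤ) (h : ∀ a ∈ s, f a ≤ 0) :
    (s.map f).sum ≤ 0 := by
  induction s using Multiset.induction with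
  | empty => simp
  | cons a s ih =>
    simp only [Multiset.map_cons, Multiset.sum_cons]
    have h1 := h a (Multiset.mem_cons_self a s)
    have h2 := ih (fun b hb => h b (Multiset.mem_cons_of_mem hb))
    omega

lemma msum_exists_pos (s : Multiset α) (f : α → ℤ) (hs : 0 < (s.map f).sum) :
    ∃ a ∈ s, 0 < f a := by
  by_contra hc
  push_neg at hc
  have := msum_nonpos s f hc
  omega

lemma msum_one (s : Multiset α) (f : α → ℤ) (h : ∀ a ∈ s, 0 ≤ f a)
    (hs : (s.map f).sum = 1) :
    ∃ g ∈ s, f g = 1 ∧ ∀ b ∈ s.erase g, f b = 0 := by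
  obtain ⟨g, hg, hfg⟩ := msum_exists_pos s f (by omega)
  have hcons : g ::ₘ s.erase g = s := Multiset.cons_erase hg
  have hsum : f g + ((s.erase g).map f).sum = 1 := by
    rw [← hs, ← hcons]; simp
  have herase_nonneg : ∀ a ∈ s.erase g, 0 ≤ f a :=
    fun a ha => h a (Multiset.mem_of_mem_erase ha)
  have h2 := msum_nonneg (s.erase g) f herase_nonneg
  refine ⟨g, hg, by omega, msum_eq_zero _ _ herase_nonneg (by omega)⟩

-- ===== The combinatorial core lemma =====
lemma combo_bound {α : Type*} (G : Finset α) (w : α → ℕ → ℤ) (L : ℕ → Multiset α)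
    (T : ℕ → ℕ → ℤ) (m : ℕ)
    (hm : G.card * 2 ^ G.card < m)
    (hL : ∀ i, i < m → ∀ g ∈ L i, g ∈ G)
    (hw : ∀ g ∈ G, ∀ j, 0 ≤ w g j)
    (hrow : ∀ i, i < m → ∀ j, j < m → ((L i).map (fun g => w g j)).sum = T i j)
    (hdiag : ∀ i, i < m → T i i = 1)
    (hoff : ∀ i, i < m → ∀ j, j < m → i ≠ j → 2 ≤ T i j) : False := by
  classical
  have hm1 : 0 < m := lt_of_le_of_lt (Nat.zero_le _) hm
  have hone : ∀ i, i < m →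
      ∃ g ∈ L i, w g i = 1 ∧ ∀ b ∈ (L i).erase g, w b i = 0 := by
    intro i hi
    exact msum_one (L i) (fun g => w g i)
      (fun a ha => hw a (hL i hi a ha) i) (by rw [hrow i hi i hi, hdiag i hi])
  have hne : Nonempty α := by
    obtain ⟨g, -, -, -⟩ := hone 0 hm1; exact ⟨g⟩
  set junk := Classical.choice hne with hjunk
  set σ : ℕ → α := fun i => if hi : i < m then (hone i hi).choose else junk with hσdef
  have hσmem : ∀ i (hi : i < m), σ i ∈ L i := by
    intro i hi
    simp only [hσdef, dif_pos hi]
    exact (hone i hi).choose_spec.1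
  have hσone : ∀ i (hi : i < m), w (σ i) i = 1 := by
    intro i hi
    simp only [hσdef, dif_pos hi]
    exact (hone i hi).choose_spec.2.1
  have hσzero : ∀ i (hi : i < m), ∀ b ∈ (L i).erase (σ i), w b i = 0 := by
    intro i hi
    simp only [hσdef, dif_pos hi]
    exact (hone i hi).choose_spec.2.2
  -- pigeonhole
  have hmaps : ∀ i ∈ Finset.range m, σ i ∈ G := by
    intro i hi
    have hi' := Finset.mem_range.1 hi
    exact hL i hi' _ (hσmem i hi')
  obtain ⟨c, hcG, hSc⟩ := Finset.exists_lt_card_fiber_of_mul_lt_card_of_maps_to hmaps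
    (by simpa using hm)
  set S := (Finset.range m).filter (fun i => σ i = c) with hSdef
  -- key existence for pairs
  have hkey : ∀ i ∈ S, ∀ i' ∈ S, i < i' →
      ∃ d ∈ G.erase c, w d i = 0 ∧ 1 ≤ w d i' := by
    intro i hiS i' hi'S hii'
    have hi : i < m := Finset.mem_range.1 (Finset.mem_filter.1 hiS).1
    have hi' : i' < m := Finset.mem_range.1 (Finset.mem_filter.1 hi'S).1
    have hσi : σ i = c := (Finset.mem_filter.1 hiS).2
    have hσi' : σ i' = c := (Finset.mem_filter.1 hi'S).2
    have hci' : w c i' = 1 := by rw [← hσi']; exact hσone i' hi'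
    have hci : w c i = 1 := by rw [← hσi]; exact hσone i hi
    have hcLi : c ∈ L i := by rw [← hσi]; exact hσmem i hi
    have hcons : c ::ₘ (L i).erase c = L i := Multiset.cons_erase hcLi
    have hsum : w c i' + (((L i).erase c).map (fun g => w g i')).sum = T i i' := by
      rw [← hrow i hi i' hi', ← hcons]; simp
    have hT : 2 ≤ T i i' := hoff i hi i' hi' (by omega)
    have hpos : 0 < (((L i).erase c).map (fun g => w g i')).sum := by omega
    obtain ⟨d, hd, hdpos⟩ := msum_exists_pos _ _ hpos
    have hdLi : d ∈ L i := Multiset.mem_of_mem_erase hd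
    have hdG : d ∈ G := hL i hi d hdLi
    have hdzero : w d i = 0 := by
      apply hσzero i hi
      rw [hσi]; exact hd
    have hdc : d ≠ c := by
      intro h; rw [h] at hdzero; omega
    exact ⟨d, Finset.mem_erase.2 ⟨hdc, hdG⟩, hdzero, by omega⟩
  -- the injection into the powerset
  set φ : ℕ → Finset α := fun i =>
    (G.erase c).filter (fun d => ∃ j ∈ S, j < i ∧ w d j = 0 ∧ 1 ≤ w d i) with hφdef
  have hφne : ∀ i ∈ S, ∀ i' ∈ S, i < i' → φ i ≠ φ i' := by
    intro i hiS i' hi'S hii' heq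
    obtain ⟨d, hdGc, hd0, hd1⟩ := hkey i hiS i' hi'S hii'
    have hdin : d ∈ φ i' := by
      rw [hφdef]
      exact Finset.mem_filter.2 ⟨hdGc, ⟨i, hiS, hii', hd0, hd1⟩⟩
    rw [← heq, hφdef] at hdin
    obtain ⟨-, j, hjS, hji, hwj0, hwi1⟩ := Finset.mem_filter.1 hdin
    omega
  have hinj : Set.InjOn φ ↑S := by
    intro i hiS i' hi'S heq
    by_contra hne'
    rcases lt_or_gt_of_ne hne' with h | h
    · exact hφne i hiS i' hi'S h heq
    · exact hφne i' hi'S i hiS h heq.symm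
  have hφmaps : ∀ i ∈ S, φ i ∈ (G.erase c).powerset := by
    intro i _
    exact Finset.mem_powerset.2 (Finset.filter_subset _ _)
  have hcard := Finset.card_le_card_of_injOn φ hφmaps hinj
  rw [Finset.card_powerset, Finset.card_erase_of_mem hcG] at hcard
  have h2 : 2 ^ (G.card - 1) ≤ 2 ^ G.card := Nat.pow_le_pow_right (by norm_num) (by omega)
  omega

-- ===== Realization: the 2-dimensional semigroup =====
section MainProof

/-- generator points -/
noncomputable def aa (i : ℕ) : V 2 := ![((pellX i : ℝ)), ((pellY i : ℝ))]
/-- dual points -/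
noncomputable def zz (j : ℕ) : V 2 := ![((pellX j : ℝ)), (-2 * (pellY j : ℝ))]

lemma aa_dot_zz (i j : ℕ) : aa i ⬝ᵥ zz j = ((pellT i j : ℤ) : ℝ) := by
  simp only [aa, zz, dotProduct, Fin.sum_univ_two, Matrix.cons_val_zero, Matrix.cons_val_one,
    Matrix.head_cons, pellT]
  push_cast
  ring

lemma cast_msum {α : Type*} (l : Multiset α) (f : α → ℤ) :
    (((l.map f).sum : ℤ) : ℝ) = (l.map (fun a => ((f a : ℤ) : ℝ))).sum := by
  induction l using Multiset.induction with
  | empty => simp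
  | cons a s ih => simp [ih]

lemma dot_msum {N : ℕ} (l : Multiset (V N)) (y : V N) :
    (l.map (fun g => g ⬝ᵥ y)).sum = l.sum ⬝ᵥ y := by
  induction l using Multiset.induction with
  | empty => simp
  | cons a s ih => simp [ih, add_dotProduct]

lemma finsum_dot {ι : Type*} {N : ℕ} (s : Finset ι) (f : ι → V N) (z : V N) :
    (∑ i ∈ s, f i) ⬝ᵥ z = ∑ i ∈ s, f i ⬝ᵥ z := by
  classical
  induction s using Finset.induction with
  | empty => simp
  | insert x s hx ih =>
    rw [Finset.sum_insert hx, Finset.sum_insert hx, add_dotProduct, ih]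

lemma int_abs_lt_one {a b : ℤ} (h : |(a : ℝ) - b| < 1) : a = b := by
  have h' : |a - b| < 1 := by exact_mod_cast h
  rw [abs_lt] at h'
  omega

theorem exists_semigroup_with_large_lifts' (k : ℕ) :
    ∃ (n : ℕ) (Γ : Set (V n)), IsAffineSemigroup Γ ∧ IsPositive Γ ∧
      Module.finrank ℝ (Submodule.span ℝ Γ) = 2 ∧
      ∀ (N : ℕ) (Γ' : Set (V N)) (ι : (V n) →ₗ[ℝ] (V N)) (A : Set (V N)),
        IsLift Γ Γ' ι → IsMinGenSet A Γ' → k ≤ A.ncard := by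
  classical
  set m := k * 2 ^ k + 2 with hmdef
  set SF : Finset (V 2) := (Finset.range m).image aa with hSFdef
  set Γ : Set (V 2) := (AddSubmonoid.closure (SF : Set (V 2)) : Set (V 2)) with hΓdef
  have hmpos : 0 < m := by omega
  have h1m : 1 < m := by omega
  have haamem : ∀ i, i < m → aa i ∈ Γ := by
    intro i hi
    exact AddSubmonoid.subset_closure (Finset.mem_coe.2 (Finset.mem_image.2 ⟨i, Finset.mem_range.2 hi, rfl⟩))
  -- integer coordinates of elements of Γ
  have hint : ∀ p ∈ AddSubmonoid.closure (SF : Set (V 2)), ∀ t : Fin 2, ∃ mi : ℤ, p t = (mi : ℝ) := by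
    intro p hp
    induction hp using AddSubmonoid.closure_induction with
    | mem x hx =>
      obtain ⟨i, -, rfl⟩ := Finset.mem_image.1 hx
      intro t
      fin_cases t
      · exact ⟨pellX i, by simp [aa]⟩
      · exact ⟨pellY i, by simp [aa]⟩
    | zero => exact fun t => ⟨0, by simp⟩
    | add x y hx hy ihx ihy =>
      intro t
      obtain ⟨mx, hmx⟩ := ihx t
      obtain ⟨my, hmy⟩ := ihy t
      exact ⟨mx + my, by simp [hmx, hmy]⟩
  -- first-coordinate positivity
  have hpos : ∀ p ∈ AddSubmonoid.closure (SF : Set (V 2)), 0 ≤ p 0 ∧ (p 0 = 0 → p = 0) := by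
    intro p hp
    induction hp using AddSubmonoid.closure_induction with
    | mem x hx =>
      obtain ⟨i, -, rfl⟩ := Finset.mem_image.1 hx
      have h1 : (1 : ℝ) ≤ (pellX i : ℝ) := by exact_mod_cast (pellX_pos i).1
      have : aa i 0 = (pellX i : ℝ) := by simp [aa]
      constructor
      · rw [this]; linarith
      · intro h0; rw [this] at h0; linarith
    | zero => exact ⟨le_refl _, fun _ => rfl⟩
    | add x y hx hy ihx ihy =>
      refine ⟨by have := ihx.1; have := ihy.1; simp only [Pi.add_apply]; linarith, ?_⟩
      intro h0
      simp only [Pi.add_apply] at h0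
      have hx0 : x 0 = 0 := by have := ihx.1; have := ihy.1; linarith
      have hy0 : y 0 = 0 := by have := ihx.1; have := ihy.1; linarith
      rw [ihx.2 hx0, ihy.2 hy0, add_zero]
  refine ⟨2, Γ, ⟨⟨SF, rfl⟩, ?_⟩, ?_, ?_, ?_⟩
  -- discreteness
  · intro p hp
    refine ⟨1, by norm_num, ?_⟩
    intro q hq hdist
    obtain ⟨p1, hp1, p2, hp2, rfl⟩ := hp
    obtain ⟨q1, hq1, q2, hq2, rfl⟩ := hq
    funext t
    obtain ⟨a1, ha1⟩ := hint p1 hp1 t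
    obtain ⟨a2, ha2⟩ := hint p2 hp2 t
    obtain ⟨b1, hb1⟩ := hint q1 hq1 t
    obtain ⟨b2, hb2⟩ := hint q2 hq2 t
    have hd : dist ((q1 - q2) t) ((p1 - p2) t) < 1 := lt_of_le_of_lt (dist_le_pi_dist _ _ t) hdist
    simp only [Pi.sub_apply, Real.dist_eq] at hd
    rw [ha1, ha2, hb1, hb2] at hd
    have : b1 - b2 = a1 - a2 := by
      apply int_abs_lt_one
      push_cast
      convert hd using 2
    simp only [Pi.sub_apply]
    rw [ha1, ha2, hb1, hb2]
    have : (b1 : ℝ) - b2 = (a1 : ℝ) - a2 := by exact_mod_cast this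
    linarith
  -- positivity
  · intro x hx hnx
    have h1 := hpos x hx
    have h2 := hpos (-x) hnx
    have hx0 : x 0 = 0 := by
      have := h1.1
      have := h2.1
      simp only [Pi.neg_apply] at *
      linarith
    exact h1.2 hx0
  -- rank
  · have hspan : Submodule.span ℝ Γ = ⊤ := by
      rw [eq_top_iff]
      intro v _
      have ha0 : aa 0 ∈ Γ := haamem 0 hmpos
      have ha1 : aa 1 ∈ Γ := haamem 1 h1m
      have hv : v = (v 0 - (3 / 2) * v 1) • aa 0 + ((1 / 2) * v 1) • aa 1 := by
        funext t
        fin_cases t <;>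
          simp [aa, pellX_succ, pellY_succ, pellX_zero, pellY_zero] <;> ring
      rw [hv]
      exact Submodule.add_mem _
        (Submodule.smul_mem _ _ (Submodule.subset_span ha0))
        (Submodule.smul_mem _ _ (Submodule.subset_span ha1))
    rw [hspan, finrank_top, Module.finrank_fintype_fun_eq_card]
    simp
  -- main bound
  · intro N Γ' ι A hLift hMin
    by_contra hlt
    push_neg at hlt
    -- Γ' basics
    have hΓ'cl : (AddSubmonoid.closure A : Set (V N)) = Γ' := hMin.1
    have hAΓ' : ∀ g ∈ A, g ∈ Γ' := by
      intro g hg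
      rw [← hΓ'cl]
      exact AddSubmonoid.subset_closure hg
    have h0Γ' : (0 : V N) ∈ Γ' := by
      rw [← hΓ'cl]
      exact AddSubmonoid.zero_mem _
    -- A is finite
    obtain ⟨S0, hS0⟩ := hLift.lift_semigroup.1
    have hrep : ∀ s ∈ S0, ∃ l : Multiset (V N), (∀ y ∈ l, y ∈ A) ∧ l.sum = s := by
      intro s hs
      have hs1 : s ∈ Γ' := by
        rw [← hS0]
        exact AddSubmonoid.subset_closure (Finset.mem_coe.2 hs)
      rw [← hΓ'cl] at hs1
      exact AddSubmonoid.exists_multiset_of_mem_closure hs1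
    set A0 : Finset (V N) := S0.attach.biUnion
      (fun s => (hrep s.1 s.2).choose.toFinset) with hA0def
    have hA0sub : (A0 : Set (V N)) ⊆ A := by
      intro g hg
      simp only [hA0def, Finset.coe_biUnion, Set.mem_iUnion, Finset.mem_coe] at hg
      obtain ⟨s, -, hgs⟩ := hg
      exact (hrep s.1 s.2).choose_spec.1 g (Multiset.mem_toFinset.1 hgs)
    have hA0gen : IsGenSet (A0 : Set (V N)) Γ' := by
      apply le_antisymm
      · have : AddSubmonoid.closure (A0 : Set (V N)) ≤ AddSubmonoid.closure A :=
          AddSubmonoid.closure_mono hA0sub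
        intro x hx
        rw [← hΓ'cl]
        exact this hx
      · rw [← hS0]
        intro x hx
        have : AddSubmonoid.closure (S0 : Set (V N)) ≤ AddSubmonoid.closure (A0 : Set (V N)) := by
          rw [AddSubmonoid.closure_le]
          intro s hs
          have hl := (hrep s hs).choose_spec.1
          have hlsum := (hrep s hs).choose_spec.2
          rw [← hlsum]
          apply AddSubmonoid.multiset_sum_mem
          intro g hg
          apply AddSubmonoid.subset_closure
          simp only [hA0def, Finset.coe_biUnion, Set.mem_iUnion, Finset.mem_coe]
          exact ⟨⟨s, hs⟩, Finset.mem_attach _ _, Multiset.mem_toFinset.2 hg⟩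
        exact this hx
    have hAfin : A.Finite := by
      by_cases heq : (A0 : Set (V N)) = A
      · rw [← heq]; exact A0.finite_toSet
      · exact absurd hA0gen (hMin.2 _ (ssubset_of_subset_of_ne hA0sub heq))
    set F : Finset (V N) := hAfin.toFinset with hFdef
    have hAncard : A.ncard = F.card := Set.ncard_eq_toFinset_card A hAfin
    -- pairing nonnegativity and integrality over Γ
    have hΓint : ∀ j : ℕ, ∀ x ∈ AddSubmonoid.closure (SF : Set (V 2)),
        (∃ mi : ℤ, zz j ⬝ᵥ x = (mi : ℝ)) ∧ 0 ≤ x ⬝ᵥ zz j := by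
      intro j x hx
      induction hx using AddSubmonoid.closure_induction with
      | mem g hg =>
        obtain ⟨i, -, rfl⟩ := Finset.mem_image.1 hg
        constructor
        · exact ⟨pellT i j, by rw [dotProduct_comm]; exact aa_dot_zz i j⟩
        · rw [aa_dot_zz i j]
          have := pellT_pos i j
          positivity
      | zero => exact ⟨⟨0, by simp⟩, by simp⟩
      | add x y hx hy ihx ihy =>
        obtain ⟨⟨mx, hmx⟩, hx0⟩ := ihx
        obtain ⟨⟨my, hmy⟩, hy0⟩ := ihy
        refine ⟨⟨mx + my, ?_⟩, ?_⟩
        · rw [dotProduct_add, hmx, hmy]; push_cast; ring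
        · rw [add_dotProduct]; linarith
    -- z_j belongs to the dual semigroup of Γ
    have hz : ∀ j : ℕ, zz j ∈ dualSemigroup Γ := by
      intro j
      constructor
      · constructor
        · -- in the span of the difference set
          have hsubset : Γ ⊆ diffSet Γ := by
            intro x hx
            exact ⟨x, hx, 0, AddSubmonoid.zero_mem _, by simp⟩
          have hspan2 : Submodule.span ℝ Γ = ⊤ := by
            rw [eq_top_iff]
            intro v _
            have ha0 : aa 0 ∈ Γ := haamem 0 hmpos
            have ha1 : aa 1 ∈ Γ := haamem 1 h1m
            have hv : v = (v 0 - (3 / 2) * v 1) • aa 0 + ((1 / 2) * v 1) • aa 1 := by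
              funext t
              fin_cases t <;>
                simp [aa, pellX_succ, pellY_succ, pellX_zero, pellY_zero] <;> ring
            rw [hv]
            exact Submodule.add_mem _
              (Submodule.smul_mem _ _ (Submodule.subset_span ha0))
              (Submodule.smul_mem _ _ (Submodule.subset_span ha1))
          have : (⊤ : Submodule ℝ (V 2)) ≤ Submodule.span ℝ (diffSet Γ) := by
            rw [← hspan2]
            exact Submodule.span_mono hsubset
          exact this trivial
        · -- integrality
          intro v hv
          obtain ⟨x, hx, y, hy, rfl⟩ := hv
          obtain ⟨⟨mx, hmx⟩, -⟩ := hΓint j x hx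
          obtain ⟨⟨my, hmy⟩, -⟩ := hΓint j y hy
          exact ⟨mx - my, by rw [dotProduct_sub, hmx, hmy]; push_cast; ring⟩
      · -- dual cone
        intro x hx
        obtain ⟨kk, cc, vv, hcc, hvv, rfl⟩ := hx
        rw [finsum_dot]
        apply Finset.sum_nonneg
        intro i _
        rw [smul_dotProduct]
        have h1 := (hΓint j (vv i) (hvv i)).2
        have h2 := hcc i
        simpa using mul_nonneg h2 h1
    -- choose dual lifts y_j
    have hy : ∀ j : ℕ, ∃ y ∈ dualSemigroup Γ', ∀ x ∈ Γ, x ⬝ᵥ zz j = ι x ⬝ᵥ y :=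
      fun j => hLift.adjoint_surj (zz j) (hz j)
    set Y : ℕ → V N := fun j => (hy j).choose with hYdef
    have hY1 : ∀ j, Y j ∈ dualSemigroup Γ' := fun j => (hy j).choose_spec.1
    have hY2 : ∀ j, ∀ x ∈ Γ, x ⬝ᵥ zz j = ι x ⬝ᵥ Y j := fun j => (hy j).choose_spec.2
    -- integer nonnegative weights
    have hwex : ∀ g ∈ A, ∀ j : ℕ, ∃ mz : ℤ, g ⬝ᵥ Y j = (mz : ℝ) ∧ 0 ≤ mz := by
      intro g hg j
      have hgd : g ∈ diffSet Γ' := ⟨g, hAΓ' g hg, 0, h0Γ', by simp⟩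
      obtain ⟨mz, hmz⟩ := (hY1 j).1.2 g hgd
      have hgc : g ∈ coneOf Γ' := by
        refine ⟨1, fun _ => 1, fun _ => g, fun _ => by norm_num, fun _ => hAΓ' g hg, ?_⟩
        simp
      have hnn : 0 ≤ g ⬝ᵥ Y j := (hY1 j).2 g hgc
      rw [dotProduct_comm] at hmz
      refine ⟨mz, hmz, ?_⟩
      rw [hmz] at hnn
      exact_mod_cast hnn
    set w : V N → ℕ → ℤ := fun g j => if hg : g ∈ A then (hwex g hg j).choose else 0
      with hwdef
    have hwspec : ∀ g (hg : g ∈ A), ∀ j, g ⬝ᵥ Y j = ((w g j : ℤ) : ℝ) ∧ 0 ≤ w g j := by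
      intro g hg j
      simp only [hwdef, dif_pos hg]
      exact ⟨(hwex g hg j).choose_spec.1, (hwex g hg j).choose_spec.2⟩
    -- multiset representations of the lifted generators
    have hLex : ∀ i, i < m → ∃ l : Multiset (V N), (∀ g ∈ l, g ∈ A) ∧ l.sum = ι (aa i) := by
      intro i hi
      have h1 : ι (aa i) ∈ Γ' := hLift.maps_to (aa i) (haamem i hi)
      rw [← hΓ'cl] at h1
      exact AddSubmonoid.exists_multiset_of_mem_closure h1
    set L : ℕ → Multiset (V N) := fun i => if hi : i < m then (hLex i hi).choose else 0
      with hLdef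
    have hLspec : ∀ i (hi : i < m), (∀ g ∈ L i, g ∈ A) ∧ (L i).sum = ι (aa i) := by
      intro i hi
      simp only [hLdef, dif_pos hi]
      exact ⟨(hLex i hi).choose_spec.1, (hLex i hi).choose_spec.2⟩
    -- the row equations over ℤ
    have hrowZ : ∀ i, i < m → ∀ j, j < m →
        ((L i).map (fun g => w g j)).sum = pellT i j := by
      intro i hi j _
      have hreal : (((L i).map (fun g => w g j)).sum : ℝ) = ((pellT i j : ℤ) : ℝ) := by
        rw [cast_msum (L i) (fun g => w g j)]
        have hcongr : ((L i).map (fun g => ((w g j : ℤ) : ℝ))).sum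
            = ((L i).map (fun g => g ⬝ᵥ Y j)).sum := by
          apply congrArg
          apply Multiset.map_congr rfl
          intro g hg
          exact ((hwspec g ((hLspec i hi).1 g hg) j).1).symm
        rw [hcongr, dot_msum, (hLspec i hi).2, ← hY2 j (aa i) (haamem i hi), aa_dot_zz]
      exact_mod_cast hreal
    -- apply the combinatorial bound
    apply combo_bound F w L (fun i j => pellT i j) m
    · -- cardinality bound
      have hr : F.card < k := by rw [← hAncard]; exact hlt
      have hk1 : 1 ≤ k := by omega
      calc F.card * 2 ^ F.card < k * 2 ^ F.card := by
            have : (0:ℕ) < 2 ^ F.card := Nat.pow_pos (by norm_num)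
            exact Nat.mul_lt_mul_of_pos_right hr this
        _ ≤ k * 2 ^ k := Nat.mul_le_mul_left k (Nat.pow_le_pow_right (by norm_num) (by omega))
        _ < m := by omega
    · intro i hi g hg
      exact (Set.Finite.mem_toFinset hAfin).2 ((hLspec i hi).1 g hg)
    · intro g hg j
      exact (hwspec g ((Set.Finite.mem_toFinset hAfin).1 hg) j).2
    · exact hrowZ
    · intro i _
      exact pellT_diag i
    · intro i _ j _ hij
      have := pellT_off hij
      omega

end MainProof

/-- For every `k` there exists a 2-dimensional positive affine semigroup
all of whose lifts have size at least `k`. -/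
theorem exists_semigroup_with_large_lifts (k : ℕ) :
    ∃ (n : ℕ) (Γ : Set (V n)), IsAffineSemigroup Γ ∧ IsPositive Γ ∧
      Module.finrank ℝ (Submodule.span ℝ Γ) = 2 ∧
      ∀ (N : ℕ) (Γ' : Set (V N)) (ι : (V n) →ₗ[ℝ] (V N)) (A : Set (V N)),
        IsLift Γ Γ' ι → IsMinGenSet A Γ' → k ≤ A.ncard := by
  exact exists_semigroup_with_large_lifts' k

end
end
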